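/- arXiv:1302.2406 — 5 statements merged into one kernel-verified Lean document; each statement's English description precedes it below -/
import Mathlib

section
/- Let Ω₁ ⊂ ℂⁿ be a balanced region, Ω₂ ⊂ ℂᵐ a bounded convex balanced region, and F : Ω₁ → Ω₂ a holomorphic map. Then the derivative F'(0) (a ℂ-linear map ℂⁿ → ℂᵐ) maps Ω₁ into Ω₂. -/
open Complex Metric Set MeasureTheory Real

theorem avg_mem {m : ℕ} (Ω₂ : Set (EuclideanSpace ℂ (Fin m)))
    (h2conv : Convex ℝ Ω₂)
    (g : ℂ → EuclideanSpace ℂ (Fin m)) (r : ℝ) (hr0 : 0 < r) (hr1 : r < 1)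
    (hgd : DifferentiableOn ℂ g (closedBall (0:ℂ) 1))
    (hgmem : ∀ θ : ℝ, (circleMap 0 1 θ)⁻¹ • g (circleMap 0 r θ) ∈ Ω₂) :
    r • (cauchyPowerSeries g 0 r 1 fun _ => 1) ∈ closure Ω₂ := by
  set φ : ℝ → EuclideanSpace ℂ (Fin m) :=
    fun θ => (circleMap 0 1 θ)⁻¹ • g (circleMap 0 r θ) with hφ
  set μ : Measure ℝ :=
    (ENNReal.ofReal (2*π)⁻¹) • (volume.restrict (Ioc (0:ℝ) (2*π))) with hμ
  haveI : IsProbabilityMeasure μ := by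
    constructor
    rw [hμ, Measure.smul_apply, Measure.restrict_apply MeasurableSet.univ, univ_inter,
      Real.volume_Ioc, smul_eq_mul, ← ENNReal.ofReal_mul (by positivity)]
    rw [sub_zero, inv_mul_cancel₀ (by positivity), ENNReal.ofReal_one]
  have hφcont : Continuous φ := by
    have h1 : Continuous fun θ => g (circleMap 0 r θ) := by
      apply hgd.continuousOn.comp_continuous (continuous_circleMap 0 r)
      intro θ
      simp [mem_closedBall, Complex.dist_eq, norm_circleMap_zero, abs_of_pos hr0, hr1.le]
    exact ((continuous_circleMap 0 1).inv₀
      (fun θ => circleMap_ne_center one_ne_zero)).smul h1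
  have hint : Integrable φ μ := by
    apply Integrable.smul_measure _ ENNReal.ofReal_ne_top
    exact (hφcont.integrableOn_Icc).mono_set Ioc_subset_Icc_self
  have hmean : (∫ θ, φ θ ∂μ) ∈ closure Ω₂ :=
    h2conv.closure.integral_mem isClosed_closure
      (Filter.Eventually.of_forall fun θ => subset_closure (hgmem θ)) hint
  have hμint : (∫ θ, φ θ ∂μ) = (2*π)⁻¹ • ∫ θ in (0:ℝ)..2*π, φ θ := by
    rw [hμ, integral_smul_measure, ENNReal.toReal_ofReal (by positivity),
      intervalIntegral.integral_of_le (by positivity)]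
  have key : (2*π)⁻¹ • (∫ θ in (0:ℝ)..2*π, φ θ)
      = r • (cauchyPowerSeries g 0 r 1 fun _ => 1) := by
    rw [cauchyPowerSeries_apply]
    simp only [circleIntegral, deriv_circleMap, sub_zero, pow_one]
    rw [← intervalIntegral.integral_smul, ← intervalIntegral.integral_smul,
      ← intervalIntegral.integral_smul]
    apply intervalIntegral.integral_congr
    intro θ _
    have hcm : circleMap 0 r θ = r * Complex.exp (θ * I) := circleMap_zero r θ
    have hcm1 : circleMap 0 1 θ = Complex.exp (θ * I) := by
      rw [circleMap_zero, Complex.ofReal_one, one_mul]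
    show (2*π)⁻¹ • (circleMap 0 1 θ)⁻¹ • g (circleMap 0 r θ)
      = r • (2*(π:ℂ)*I)⁻¹ • (circleMap 0 r θ * I) •
        (1/circleMap 0 r θ) • (circleMap 0 r θ)⁻¹ • g (circleMap 0 r θ)
    rw [← algebraMap_smul ℂ ((2*π)⁻¹ : ℝ), ← algebraMap_smul ℂ r, Complex.coe_algebraMap]
    simp only [smul_smul]
    congr 1
    rw [hcm, hcm1]
    have he : Complex.exp (θ * I) ≠ 0 := Complex.exp_ne_zero _
    have hrne : (r:ℂ) ≠ 0 := by exact_mod_cast hr0.ne'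
    have hπ : (π:ℂ) ≠ 0 := by exact_mod_cast Real.pi_ne_zero
    push_cast
    field_simp
  rw [← key, ← hμint]
  exact hmean

/-- Schwarz lemma for convex balanced domains, part (i):
if `Ω₁ ⊂ ℂⁿ` is a balanced region, `Ω₂ ⊂ ℂᵐ` a bounded convex balanced region, and
`F : Ω₁ → Ω₂` is holomorphic, then `F'(0)` maps `Ω₁` into `Ω₂`. -/
theorem stmt3 {n m : ℕ}
    (Ω₁ : Set (EuclideanSpace ℂ (Fin n))) (Ω₂ : Set (EuclideanSpace ℂ (Fin m)))
    (h1open : IsOpen Ω₁) (h1conn : IsConnected Ω₁)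
    (h1bal : ∀ z ∈ Ω₁, ∀ ζ : ℂ, ‖ζ‖ ≤ 1 → ζ • z ∈ Ω₁)
    (h2open : IsOpen Ω₂) (h2conn : IsConnected Ω₂)
    (h2bdd : Bornology.IsBounded Ω₂) (h2conv : Convex ℝ Ω₂)
    (h2bal : ∀ w ∈ Ω₂, ∀ ζ : ℂ, ‖ζ‖ ≤ 1 → ζ • w ∈ Ω₂)
    (F : EuclideanSpace ℂ (Fin n) → EuclideanSpace ℂ (Fin m))
    (hF : DifferentiableOn ℂ F Ω₁) (hFmaps : Set.MapsTo F Ω₁ Ω₂) :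
    ∀ z ∈ Ω₁, fderiv ℂ F 0 z ∈ Ω₂ := by
  intro z hz
  obtain ⟨w₀, hw₀⟩ := h2conn.nonempty
  have h0₂ : (0 : EuclideanSpace ℂ (Fin m)) ∈ Ω₂ := by
    simpa using h2bal w₀ hw₀ 0 (by norm_num)
  have h0₁ : (0 : EuclideanSpace ℂ (Fin n)) ∈ Ω₁ := by
    simpa using h1bal z hz 0 (by norm_num)
  -- find s > 1 with (s:ℂ) • z ∈ Ω₁
  have hc : ContinuousAt (fun c : ℂ => c • z) 1 :=
    (continuous_id.smul continuous_const).continuousAt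
  have hev : {c : ℂ | c • z ∈ Ω₁} ∈ nhds (1:ℂ) := by
    apply hc (h1open.mem_nhds ?_)
    simpa using hz
  obtain ⟨δ, hδ0, hδ⟩ := Metric.mem_nhds_iff.mp hev
  set s : ℝ := 1 + δ/2 with hs
  have hs1 : 1 < s := by simp [hs]; positivity
  have hz' : (s:ℂ) • z ∈ Ω₁ := by
    apply hδ
    simp only [mem_ball, Complex.dist_eq, hs]
    push_cast
    rw [show (1:ℂ) + δ/2 - 1 = (δ/2 : ℝ) by push_cast; ring]
    rw [Complex.norm_real, Real.norm_eq_abs, abs_of_pos (by positivity)]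
    linarith
  set z' := (s:ℂ) • z with hz'def
  set g : ℂ → EuclideanSpace ℂ (Fin m) := fun ζ => F (ζ • z') with hg
  have hmaps : ∀ ζ : ℂ, ‖ζ‖ ≤ 1 → ζ • z' ∈ Ω₁ := fun ζ h => h1bal _ hz' ζ h
  have hgd : DifferentiableOn ℂ g (closedBall (0:ℂ) 1) := by
    apply hF.comp ((differentiable_id.smul_const z').differentiableOn)
    intro ζ hζ
    exact hmaps ζ (by simpa [mem_closedBall, Complex.dist_eq] using hζ)
  set r : ℝ := (1 + s⁻¹)/2 with hr
  have hsinv : s⁻¹ < 1 := inv_lt_one_of_one_lt₀ hs1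
  have hsinv0 : 0 < s⁻¹ := by positivity
  have hr0 : 0 < r := by rw [hr]; positivity
  have hr1 : r < 1 := by rw [hr]; linarith
  have hrs : 1 < r * s := by
    rw [hr]
    have h : (1 + s⁻¹)/2 * s = (s + 1)/2 := by
      field_simp
    rw [h]; linarith
  -- power series facts
  have hball := (hgd.mono (closedBall_subset_closedBall hr1.le)).hasFPowerSeriesOnBall
      (R := ⟨r, hr0.le⟩) (by exact_mod_cast hr0)
  have hd : deriv g 0 = cauchyPowerSeries g 0 r 1 fun _ => 1 :=
    hball.hasFPowerSeriesAt.deriv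
  have hder : HasDerivAt g (fderiv ℂ F 0 z') 0 := by
    have h1 : HasDerivAt (fun ζ : ℂ => ζ • z') z' 0 := by
      simpa using (hasDerivAt_id (0:ℂ)).smul_const z'
    have hF0 : DifferentiableAt ℂ F 0 := hF.differentiableAt (h1open.mem_nhds h0₁)
    have h0e : (fun ζ : ℂ => ζ • z') 0 = 0 := zero_smul ℂ z'
    have hl : HasFDerivAt F (fderiv ℂ F 0) ((fun ζ : ℂ => ζ • z') 0) := by
      rw [h0e]; exact hF0.hasFDerivAt
    exact hl.comp_hasDerivAt 0 h1
  have hgmem : ∀ θ : ℝ, (circleMap 0 1 θ)⁻¹ • g (circleMap 0 r θ) ∈ Ω₂ := by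
    intro θ
    have h1 : g (circleMap 0 r θ) ∈ Ω₂ := by
      apply hFmaps
      apply hmaps
      simp [norm_circleMap_zero, abs_of_pos hr0, hr1.le]
    apply h2bal _ h1
    simp [norm_inv, norm_circleMap_zero]
  have hmem : r • fderiv ℂ F 0 z' ∈ closure Ω₂ := by
    rw [← hder.deriv, hd]
    exact avg_mem Ω₂ h2conv g r hr0 hr1 hgd hgmem
  set w := fderiv ℂ F 0 z with hw
  set t : ℝ := r * s with ht
  have htw : t • w ∈ closure Ω₂ := by
    have : r • fderiv ℂ F 0 z' = t • w := by
      rw [hz'def, ContinuousLinearMap.map_smul, ht, hw, ← smul_smul]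
      congr 1
    rwa [this] at hmem
  have ht1 : 1 < t := hrs
  have htinv : t⁻¹ ∈ Set.Ioo (0:ℝ) 1 := ⟨by positivity, inv_lt_one_of_one_lt₀ ht1⟩
  have hseg : w ∈ openSegment ℝ (0 : EuclideanSpace ℂ (Fin m)) (t • w) := by
    refine ⟨1 - t⁻¹, t⁻¹, by linarith [htinv.2], htinv.1, by ring, ?_⟩
    rw [smul_zero, zero_add, smul_smul, inv_mul_cancel₀ (by positivity), one_smul]
  have := h2conv.openSegment_interior_closure_subset_interior
    (x := 0) (y := t • w) (by rw [h2open.interior_eq]; exact h0₂) htw hseg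
  rwa [h2open.interior_eq] at this
end

section
/- Let D be a bounded convex balanced domain in ℂⁿ, so that D is the open unit ball of a norm ‖·‖ on ℂⁿ. Let F : D → D be holomorphic with F(0) = 0, and suppose F restricts to a biholomorphism between two subregions W₁, W₂ of D containing 0. For z ∈ D \ {0} let Δ_z := {ζz : ζ ∈ ℂ, ζz ∈ D}. If z ∈ W₁ is such that Δ_z ⊆ W₁ and Δ_{F(z)} ⊆ W₂, then ‖F(z)‖ = ‖z‖. -/
open Set Metric

variable {n : ℕ}

local notation "E" => EuclideanSpace ℂ (Fin n)

section helpers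

variable (ν : EuclideanSpace ℂ (Fin n) → ℝ)
  (hνsmul : ∀ (c : ℂ) z, ν (c • z) = ‖c‖ * ν z)
  (hνadd : ∀ z w, ν (z + w) ≤ ν z + ν w)

include hνsmul in
lemma nu_zero : ν 0 = 0 := by
  have := hνsmul 0 0
  simpa using this

include hνsmul hνadd in
lemma nu_nonneg (x : EuclideanSpace ℂ (Fin n)) : 0 ≤ ν x := by
  have h1 : ν (-x) = ν x := by
    have := hνsmul (-1) x
    simpa using this
  have h2 : ν (x + (-x)) ≤ ν x + ν (-x) := hνadd x (-x)
  rw [add_neg_cancel, nu_zero ν hνsmul, h1] at h2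
  linarith

include hνsmul hνadd in
lemma nu_hb (x₀ : EuclideanSpace ℂ (Fin n)) :
    ∃ ℓ : EuclideanSpace ℂ (Fin n) →ₗ[ℂ] ℂ,
      (∀ x, ‖ℓ x‖ ≤ ν x) ∧ (ℓ x₀).re = ν x₀ := by
  by_cases hx₀ : x₀ = 0
  · exact ⟨0, fun x => by simpa using nu_nonneg ν hνsmul hνadd x,
      by simp [hx₀, nu_zero ν hνsmul]⟩
  -- real-scalar smul agrees with complex smul
  have hsmulR : ∀ (c : ℝ) (x : EuclideanSpace ℂ (Fin n)), c • x = (c : ℂ) • x := by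
    intro c x
    rw [show ((c : ℂ)) = c • (1 : ℂ) by simp, smul_assoc, one_smul]
  -- linear functional on the real span of x₀
  set p : Submodule ℝ (EuclideanSpace ℂ (Fin n)) := Submodule.span ℝ {x₀} with hp
  let e : ℝ ≃ₗ[ℝ] p := LinearEquiv.toSpanNonzeroSingleton ℝ _ x₀ hx₀
  let f₀ : p →ₗ[ℝ] ℝ := (ν x₀) • (e.symm : p →ₗ[ℝ] ℝ)
  have he : ∀ y : p, (e.symm y : ℝ) • x₀ = (y : EuclideanSpace ℂ (Fin n)) :=
    fun y => LinearEquiv.coord_apply_smul ℝ _ x₀ hx₀ y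
  have hf₀le : ∀ y : p, f₀ y ≤ ν y := by
    intro y
    have hy : ((e.symm y : ℝ)) • x₀ = (y : EuclideanSpace ℂ (Fin n)) := he y
    have : ν (y : EuclideanSpace ℂ (Fin n)) = |(e.symm y : ℝ)| * ν x₀ := by
      rw [← hy, hsmulR, hνsmul]
      simp
    rw [this]
    have : f₀ y = ν x₀ * (e.symm y) := by simp [f₀, mul_comm]
    rw [this]
    have h1 : (e.symm y : ℝ) ≤ |(e.symm y : ℝ)| := le_abs_self _
    nlinarith [nu_nonneg ν hνsmul hνadd x₀]
  obtain ⟨g, hg_eq, hg_le⟩ :=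
    exists_extension_of_le_sublinear ⟨p, f₀⟩ ν
      (fun c hc x => by rw [hsmulR, hνsmul]; simp [abs_of_pos hc])
      hνadd hf₀le
  have hx₀p : x₀ ∈ p := Submodule.mem_span_singleton_self x₀
  have hgx₀ : g x₀ = ν x₀ := by
    have h1 : g x₀ = f₀ ⟨x₀, hx₀p⟩ := hg_eq ⟨x₀, hx₀p⟩
    have h2 : e.symm ⟨x₀, hx₀p⟩ = 1 := by
      have h3 : ((e.symm ⟨x₀, hx₀p⟩ : ℝ)) • x₀ = x₀ := he ⟨x₀, hx₀p⟩
      have h4 : ((e.symm ⟨x₀, hx₀p⟩ : ℝ) - 1) • x₀ = 0 := by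
        rw [sub_smul, one_smul, h3, sub_self]
      rcases smul_eq_zero.mp h4 with h | h
      · linarith [sub_eq_zero.mp (by linarith [h] : (e.symm ⟨x₀, hx₀p⟩ : ℝ) - 1 = 0)]
      · exact absurd h hx₀
    rw [h1]
    simp [f₀, h2]
  refine ⟨g.extendTo𝕜', ?_, ?_⟩
  · intro x
    by_cases h : (g.extendTo𝕜' x : ℂ) = 0
    · rw [h, norm_zero]; exact nu_nonneg ν hνsmul hνadd x
    · have hsq := g.norm_extendTo𝕜'_apply_sq (𝕜 := ℂ) x
      have hb : g ((starRingEnd ℂ) (g.extendTo𝕜' x : ℂ) • x) ≤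
          ν ((starRingEnd ℂ) (g.extendTo𝕜' x : ℂ) • x) := hg_le _
      rw [hνsmul] at hb
      have hnc : ‖(starRingEnd ℂ) (g.extendTo𝕜' x : ℂ)‖ = ‖(g.extendTo𝕜' x : ℂ)‖ :=
        RCLike.norm_conj _
      rw [hnc] at hb
      have hpos : 0 < ‖(g.extendTo𝕜' x : ℂ)‖ := norm_pos_iff.mpr h
      have : ‖(g.extendTo𝕜' x : ℂ)‖ ^ 2 ≤ ‖(g.extendTo𝕜' x : ℂ)‖ * ν x := by
        exact hsq.trans_le hb
      nlinarith
  · have h := g.extendTo𝕜'_apply_re (𝕜 := ℂ) x₀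
    rw [RCLike.re_to_complex] at h
    exact h.trans hgx₀

include hνsmul hνadd in
lemma nu_schwarz (hν0 : ∀ z, ν z = 0 ↔ z = 0)
    (G : EuclideanSpace ℂ (Fin n) → EuclideanSpace ℂ (Fin n))
    (S : Set (EuclideanSpace ℂ (Fin n)))
    (hGdiff : DifferentiableOn ℂ G S) (hGlt : ∀ w ∈ S, ν (G w) < 1)
    (hG0 : G 0 = 0) (z : EuclideanSpace ℂ (Fin n)) (hz : ν z < 1)
    (hline : ∀ ζ : ℂ, ν (ζ • z) < 1 → ζ • z ∈ S) :
    ν (G z) ≤ ν z := by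
  by_cases hz0 : ν z = 0
  · rw [(hν0 z).mp hz0, hG0]
  have hr : 0 < ν z := lt_of_le_of_ne (nu_nonneg ν hνsmul hνadd z) (Ne.symm hz0)
  obtain ⟨ℓ, hℓle, hℓre⟩ := nu_hb ν hνsmul hνadd (G z)
  set φ : ℂ → ℂ := fun ζ => ℓ (G (ζ • z)) with hφ
  have hmem : ∀ ζ : ℂ, ζ ∈ ball (0 : ℂ) (ν z)⁻¹ → ζ • z ∈ S := by
    intro ζ hζ
    apply hline
    rw [hνsmul]
    rw [mem_ball_zero_iff] at hζ
    calc ‖ζ‖ * ν z < (ν z)⁻¹ * ν z := by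
          exact mul_lt_mul_of_pos_right hζ hr
      _ = 1 := inv_mul_cancel₀ hz0
  have hℓc : Differentiable ℂ (LinearMap.toContinuousLinearMap ℓ : EuclideanSpace ℂ (Fin n) →L[ℂ] ℂ) :=
    (LinearMap.toContinuousLinearMap ℓ).differentiable
  have hφdiff : DifferentiableOn ℂ φ (ball (0 : ℂ) (ν z)⁻¹) := by
    have h1 : Differentiable ℂ (fun ζ : ℂ => ζ • z) := differentiable_id.smul_const z
    have h2 : DifferentiableOn ℂ (fun ζ : ℂ => G (ζ • z)) (ball (0 : ℂ) (ν z)⁻¹) :=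
      hGdiff.comp h1.differentiableOn hmem
    exact hℓc.comp_differentiableOn h2
  have hφ0 : φ 0 = 0 := by simp [hφ, hG0]
  have hφmaps : MapsTo φ (ball (0 : ℂ) (ν z)⁻¹) (ball (φ 0) 1) := by
    intro ζ hζ
    rw [hφ0, mem_ball_zero_iff]
    calc ‖φ ζ‖ ≤ ν (G (ζ • z)) := hℓle _
      _ < 1 := hGlt _ (hmem ζ hζ)
  have h1mem : (1 : ℂ) ∈ ball (0 : ℂ) (ν z)⁻¹ := by
    rw [mem_ball_zero_iff]
    simpa using (one_lt_inv₀ hr).mpr hz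
  have key := Complex.dist_le_div_mul_dist_of_mapsTo_ball hφdiff (hφmaps.mono_right ball_subset_closedBall) h1mem
  rw [hφ0] at key
  simp only [dist_zero_right] at key
  have hφ1 : ‖φ 1‖ ≤ ν z := by
    have : (1 : ℝ) / (ν z)⁻¹ = ν z := by field_simp
    calc ‖φ 1‖ ≤ 1 / (ν z)⁻¹ * ‖(1 : ℂ)‖ := key
      _ = ν z := by rw [this]; simp
  have : φ 1 = ℓ (G z) := by simp [hφ]
  rw [this] at hφ1
  calc ν (G z) = (ℓ (G z)).re := hℓre.symm
    _ ≤ ‖ℓ (G z)‖ := Complex.re_le_norm _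
    _ ≤ ν z := hφ1

end helpers


/-- Key Lemma computation: Let `D` be the open unit ball of a norm `ν` on `ℂⁿ`
(a bounded convex balanced domain), `F : D → D` holomorphic with `F(0) = 0`, restricting to
a biholomorphism of subregions `W₁, W₂ ∋ 0` of `D`.  If `z ∈ W₁` satisfies
`Δ_z ⊆ W₁` and `Δ_{F(z)} ⊆ W₂`, then `ν(F z) = ν z`. -/
theorem stmt4 {n : ℕ} (ν : EuclideanSpace ℂ (Fin n) → ℝ)
    (hν0 : ∀ z, ν z = 0 ↔ z = 0)
    (hνsmul : ∀ (c : ℂ) z, ν (c • z) = ‖c‖ * ν z)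
    (hνadd : ∀ z w, ν (z + w) ≤ ν z + ν w)
    (D : Set (EuclideanSpace ℂ (Fin n))) (hD : D = {z | ν z < 1})
    (hbdd : Bornology.IsBounded D)
    (F Finv : EuclideanSpace ℂ (Fin n) → EuclideanSpace ℂ (Fin n))
    (hF : DifferentiableOn ℂ F D) (hFmaps : Set.MapsTo F D D) (hF0 : F 0 = 0)
    (W₁ W₂ : Set (EuclideanSpace ℂ (Fin n)))
    (hW₁ : W₁ ⊆ D) (hW₂ : W₂ ⊆ D)
    (hW₁open : IsOpen W₁) (hW₂open : IsOpen W₂)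
    (h0W₁ : 0 ∈ W₁) (h0W₂ : 0 ∈ W₂)
    (hFW : Set.MapsTo F W₁ W₂)
    (hFinv : DifferentiableOn ℂ Finv W₂) (hFinvmaps : Set.MapsTo Finv W₂ W₁)
    (hleft : ∀ z ∈ W₁, Finv (F z) = z) (hright : ∀ w ∈ W₂, F (Finv w) = w)
    (z : EuclideanSpace ℂ (Fin n)) (hz : z ∈ W₁)
    (hΔ₁ : {w | ∃ ζ : ℂ, w = ζ • z} ∩ D ⊆ W₁)
    (hΔ₂ : {w | ∃ ζ : ℂ, w = ζ • F z} ∩ D ⊆ W₂) :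
    ν (F z) = ν z := by
  have h1 : ν (F z) ≤ ν z := by
    apply nu_schwarz ν hνsmul hνadd hν0 F D hF
      (fun w hw => by have := hFmaps hw; rwa [hD] at this) hF0 z
      (by have := hW₁ hz; rwa [hD] at this)
    intro ζ hζ
    rw [hD]; exact hζ
  have h2 : ν z ≤ ν (F z) := by
    have hFz : F z ∈ W₂ := hFW hz
    have := nu_schwarz ν hνsmul hνadd hν0 Finv W₂ hFinv
      (fun w hw => by have := hW₁ (hFinvmaps hw); rwa [hD] at this)
      (by have h := hleft 0 h0W₁; rwa [hF0] at h) (F z)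
      (by have := hW₂ hFz; rwa [hD] at this)
      (fun ζ hζ => hΔ₂ ⟨⟨ζ, rfl⟩, by rw [hD]; exact hζ⟩)
    rwa [hleft z hz] at this
  linarith
end

section
/- Let D ⊂ ℂⁿ be a bounded domain and p ∈ ∂D. Suppose there is a ball B centered at p and a function h, holomorphic on B ∩ D and continuous on the closure of B ∩ D, with h(p) = 1 and |h(z)| < 1 for all z in the closure of B ∩ D other than p. Let a₀ ∈ D and let {φ_k} be a sequence of automorphisms of D (biholomorphic self-maps) with φ_k(a₀) → p. Then φ_k converges uniformly on compact subsets of D to the constant map with value p. -/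
open Filter Metric Set Complex Topology

lemma normSq_lt_one {a : ℂ} (ha : ‖a‖ < 1) : Complex.normSq a < 1 := by
  rw [← Complex.sq_norm]
  nlinarith [norm_nonneg a]

lemma mobius_lt {a w : ℂ} (ha : ‖a‖ < 1) (hw : ‖w‖ < 1) :
    ‖a - w‖ < ‖1 - (starRingEnd ℂ) a * w‖ := by
  have key : Complex.normSq (a - w) + (1 - Complex.normSq a) * (1 - Complex.normSq w)
      = Complex.normSq (1 - (starRingEnd ℂ) a * w) := by
    simp only [Complex.normSq_apply, Complex.sub_re, Complex.sub_im, Complex.mul_re,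
      Complex.mul_im, Complex.conj_re, Complex.conj_im, Complex.one_re, Complex.one_im]
    ring
  have ha2 := normSq_lt_one ha
  have hw2 := normSq_lt_one hw
  have h1 : Complex.normSq (a - w) < Complex.normSq (1 - (starRingEnd ℂ) a * w) := by nlinarith
  refine lt_of_pow_lt_pow_left₀ 2 (norm_nonneg (1 - (starRingEnd ℂ) a * w)) ?_
  rw [Complex.sq_norm, Complex.sq_norm]; exact h1

lemma mobius_ne {a w : ℂ} (ha : ‖a‖ < 1) (hw : ‖w‖ < 1) :
    1 - (starRingEnd ℂ) a * w ≠ 0 := by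
  intro h0
  have h2 := mobius_lt ha hw
  rw [h0, norm_zero] at h2
  exact (norm_nonneg (a - w)).not_gt h2



/-- If `f : 𝔻 → 𝔻` is holomorphic, then `‖1 - f l‖ (1 - ‖l‖) ≤ ‖1 - f 0‖ (1 + ‖l‖)`. -/
lemma disk_est {f : ℂ → ℂ} (hf : DifferentiableOn ℂ f (ball 0 1))
    (hlt : ∀ z ∈ ball (0:ℂ) 1, ‖f z‖ < 1) {l : ℂ} (hl : l ∈ ball (0:ℂ) 1) :
    ‖1 - f l‖ * (1 - ‖l‖) ≤ ‖1 - f 0‖ * (1 + ‖l‖) := by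
  have h0 : (0:ℂ) ∈ ball (0:ℂ) 1 := by simp
  set a := f 0 with ha_def
  have ha : ‖a‖ < 1 := hlt 0 h0
  set g : ℂ → ℂ := fun z => (a - f z) / (1 - (starRingEnd ℂ) a * f z) with hg_def
  have hgd : DifferentiableOn ℂ g (ball 0 1) := by
    apply DifferentiableOn.div
    · exact (differentiableOn_const a).sub hf
    · exact (differentiableOn_const 1).sub ((differentiableOn_const _).mul hf)
    · exact fun z hz => mobius_ne ha (hlt z hz)
  have hgmem : ∀ z ∈ ball (0:ℂ) 1, ‖g z‖ < 1 := by
    intro z hz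
    have hne := mobius_ne ha (hlt z hz)
    rw [hg_def]
    simp only [norm_div]
    rw [div_lt_one (norm_pos_iff.mpr hne)]
    exact mobius_lt ha (hlt z hz)
  have hg0 : g 0 = 0 := by simp [hg_def, ha_def]
  have hmaps : MapsTo g (ball (0:ℂ) 1) (ball (g 0) 1) := by
    intro z hz
    rw [hg0, mem_ball, dist_zero_right]
    exact hgmem z hz
  have hs := Complex.dist_le_div_mul_dist_of_mapsTo_ball hgd (hmaps.mono_right ball_subset_closedBall) hl
  rw [hg0, dist_zero_right, dist_zero_right, div_one, one_mul] at hs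
  -- hs : ‖g l‖ ≤ ‖l‖, i.e. ‖a - f l‖ ≤ ‖l‖ * ‖1 - conj a * f l‖
  have hne := mobius_ne ha (hlt l hl)
  have hs' : ‖a - f l‖ ≤ ‖l‖ * ‖1 - (starRingEnd ℂ) a * f l‖ := by
    have h2 : ‖g l‖ * ‖1 - (starRingEnd ℂ) a * f l‖ = ‖a - f l‖ := by
      rw [hg_def]; simp only [norm_div]
      rw [div_mul_cancel₀]
      exact (norm_ne_zero_iff).mpr hne
    calc ‖a - f l‖ = ‖g l‖ * ‖1 - (starRingEnd ℂ) a * f l‖ := h2.symm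
      _ ≤ ‖l‖ * ‖1 - (starRingEnd ℂ) a * f l‖ :=
          mul_le_mul_of_nonneg_right hs (norm_nonneg _)
  -- triangle: ‖1 - conj a * f l‖ ≤ ‖1 - f l‖ + ‖1 - a‖
  have htri : ‖1 - (starRingEnd ℂ) a * f l‖ ≤ ‖1 - f l‖ + ‖1 - a‖ := by
    have heq : 1 - (starRingEnd ℂ) a * f l = (1 - f l) + (1 - (starRingEnd ℂ) a) * f l := by ring
    rw [heq]
    refine (norm_add_le _ _).trans ?_
    gcongr
    rw [norm_mul]
    have h3 : ‖1 - (starRingEnd ℂ) a‖ = ‖1 - a‖ := by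
      rw [show (1:ℂ) - (starRingEnd ℂ) a = (starRingEnd ℂ) (1 - a) by simp, RCLike.norm_conj]
    rw [h3]
    nth_rewrite 2 [show ‖(1:ℂ) - a‖ = ‖1 - a‖ * 1 by ring]
    gcongr
    exact (hlt l hl).le
  have h4 : ‖1 - f l‖ ≤ ‖1 - a‖ + ‖a - f l‖ := by
    calc ‖1 - f l‖ = ‖(1 - a) + (a - f l)‖ := by ring_nf
      _ ≤ ‖1 - a‖ + ‖a - f l‖ := norm_add_le _ _
  have hln : ‖l‖ < 1 := by simpa using hl
  nlinarith [norm_nonneg (1 - a), norm_nonneg l, norm_nonneg (1 - f l)]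


/-- Uniform Lipschitz bound for a bounded holomorphic map on a quarter-ball. -/
lemma lip_lemma {E F : Type*} [NormedAddCommGroup E] [NormedSpace ℂ E]
    [NormedAddCommGroup F] [NormedSpace ℂ F]
    {M R : ℝ} {c : E} {Φ : E → F}
    (hΦ : DifferentiableOn ℂ Φ (Metric.ball c R))
    (hmaps : ∀ w ∈ Metric.ball c R, Φ w ∈ Metric.ball (0:F) M)
    {x y : E} (hx : x ∈ Metric.ball c (R/4)) (hy : y ∈ Metric.ball c (R/4)) :
    dist (Φ x) (Φ y) ≤ 2*(2*M+1)/R * dist x y := by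
  have hR0 : 0 < R := by
    have := Metric.nonempty_ball.1 ⟨x, hx⟩
    linarith
  rcases eq_or_ne x y with rfl | hxy
  · simp [mul_nonneg]
  set d := dist y x with hd_def
  have hd0 : 0 < d := dist_pos.2 (Ne.symm hxy)
  set u := y - x with hu_def
  have hu_norm : ‖u‖ = d := by rw [hu_def, hd_def, dist_eq_norm]
  set ρ := (R/2)/d with hρ_def
  have hdR : d < R/2 := by
    have h1 : dist y c < R/4 := hy
    have h2 : dist c x < R/4 := by rw [dist_comm]; exact hx
    calc d ≤ dist y c + dist c x := dist_triangle _ _ _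
      _ < R/2 := by linarith
  have hρ1 : 1 < ρ := by rw [hρ_def, lt_div_iff₀ hd0, one_mul]; exact hdR
  have hρ0 : 0 < ρ := lt_trans one_pos hρ1
  have hmem : ∀ l ∈ Metric.ball (0:ℂ) ρ, x + l • u ∈ Metric.ball c R := by
    intro l hl
    rw [Metric.mem_ball, dist_zero_right] at hl
    have h1 : dist (x + l • u) x = ‖l • u‖ := by rw [dist_eq_norm]; congr 1; abel
    have h2 : ‖l • u‖ < R/2 := by
      rw [norm_smul, hu_norm]
      calc ‖l‖ * d < ρ * d := mul_lt_mul_of_pos_right hl hd0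
        _ = R/2 := by rw [hρ_def]; field_simp
    have h3 : dist x c < R/4 := hx
    calc dist (x + l • u) c ≤ dist (x + l • u) x + dist x c := dist_triangle _ _ _
      _ < R/2 + R/4 := by rw [h1]; linarith
      _ < R := by linarith
  set G : ℂ → F := fun l => Φ (x + l • u) with hG_def
  have haff : Differentiable ℂ (fun l : ℂ => x + l • u) :=
    (differentiable_id.smul_const u).const_add x
  have hGd : DifferentiableOn ℂ G (Metric.ball 0 ρ) :=
    hΦ.comp haff.differentiableOn (fun l hl => hmem l hl)
  have hM0 : 0 < M := by
    have := hmaps x (Metric.ball_subset_ball (by linarith) hx)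
    rw [Metric.mem_ball] at this
    exact lt_of_le_of_lt dist_nonneg this
  have hGmaps : MapsTo G (Metric.ball 0 ρ) (Metric.ball (G 0) (2*M+1)) := by
    intro l hl
    have h1 := hmaps _ (hmem l hl)
    have h2 := hmaps _ (hmem 0 (by simpa [Metric.mem_ball] using hρ0))
    rw [Metric.mem_ball] at h1 h2 ⊢
    have h3 := dist_triangle (G l) (0:F) (G 0)
    rw [dist_comm (0:F) (G 0)] at h3
    have : G l = Φ (x + l • u) := rfl
    have h4 : dist (G l) 0 < M := h1
    have h5 : dist (G 0) 0 < M := h2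
    linarith
  have hone : (1:ℂ) ∈ Metric.ball (0:ℂ) ρ := by
    rw [Metric.mem_ball, dist_zero_right, norm_one]; exact hρ1
  have hsch := Complex.dist_le_div_mul_dist_of_mapsTo_ball hGd (hGmaps.mono_right ball_subset_closedBall) hone
  have hxy' : x + (1:ℂ) • u = y := by rw [one_smul, hu_def]; abel
  have hG1 : G 1 = Φ y := by rw [hG_def]; simp only; rw [hxy']
  have hG0 : G 0 = Φ x := by rw [hG_def]; simp
  rw [hG1, hG0, dist_zero_right, norm_one, mul_one] at hsch
  calc dist (Φ x) (Φ y) = dist (Φ y) (Φ x) := dist_comm _ _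
    _ ≤ (2*M+1)/ρ := hsch
    _ = 2*(2*M+1)/R * d := by rw [hρ_def]; field_simp
    _ = 2*(2*M+1)/R * dist x y := by rw [hd_def, dist_comm]




/-- Key local propagation lemma. -/
lemma key_lemma {E : Type*} [NormedAddCommGroup E] [NormedSpace ℂ E]
    {D : Set E} (hopen : IsOpen D)
    {p : E} (hpD : p ∉ D)
    {r : ℝ} (hr : 0 < r)
    {h : E → ℂ}
    (hhol : DifferentiableOn ℂ h (Metric.ball p r ∩ D))
    (hcont : ContinuousOn h (closure (Metric.ball p r ∩ D)))
    (hpcl : p ∈ closure (Metric.ball p r ∩ D))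
    (hhp : h p = 1)
    (hpeak : ∀ z ∈ closure (Metric.ball p r ∩ D), z ≠ p → ‖h z‖ < 1)
    (hb : ∀ ε > 0, ∃ b < (1:ℝ), ∀ w ∈ closure (Metric.ball p r ∩ D),
      b < ‖h w‖ → dist w p < ε)
    {M : ℝ} (hM1 : (1:ℝ) ≤ M) (hMD : D ⊆ Metric.ball 0 M)
    {φ : ℕ → E → E}
    (hφhol : ∀ k, DifferentiableOn ℂ (φ k) D)
    (hφmaps : ∀ k, Set.MapsTo (φ k) D D)
    {c : E} (hcD : c ∈ D) :
    ∃ t, 0 < t ∧ Metric.ball c t ⊆ D ∧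
      ∀ c' ∈ Metric.ball c t, Tendsto (fun k => φ k c') atTop (nhds p) →
        TendstoUniformlyOn (fun k => φ k) (fun _ => p) atTop (Metric.ball c t) := by
  obtain ⟨R, hR0, hRD⟩ := Metric.isOpen_iff.1 hopen c hcD
  have hR4D : Metric.ball c (R/4) ⊆ D := (Metric.ball_subset_ball (by linarith)).trans hRD
  set L : ℝ := 2*(2*M+1)/R with hL_def
  have hL0 : 0 < L := by apply div_pos _ hR0; nlinarith
  have lip : ∀ k, ∀ x ∈ Metric.ball c (R/4), ∀ y ∈ Metric.ball c (R/4),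
      dist (φ k x) (φ k y) ≤ L * dist x y := by
    intro k x hx y hy
    exact lip_lemma ((hφhol k).mono hRD) (fun w hw => hMD (hφmaps k (hRD hw))) hx hy
  set t := min (R/16) (r/(8*L)) with ht_def
  have ht0 : 0 < t := lt_min (by linarith) (div_pos hr (by linarith))
  have htR : t ≤ R/16 := min_le_left _ _
  have htr : L * t ≤ r/8 := by
    have h1 : t ≤ r/(8*L) := min_le_right _ _
    calc L * t ≤ L * (r/(8*L)) := mul_le_mul_of_nonneg_left h1 hL0.le
      _ = r/8 := by field_simp
  have htD : Metric.ball c t ⊆ D := (Metric.ball_subset_ball (by linarith)).trans hRD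
  refine ⟨t, ht0, htD, ?_⟩
  intro c' hc' htc'
  have hc'D : c' ∈ D := htD hc'
  have hc'4 : c' ∈ Metric.ball c (R/4) := by
    rw [Metric.mem_ball] at hc' ⊢
    calc dist c' c < t := hc'
      _ ≤ R/16 := htR
      _ < R/4 := by linarith
  have hδ : Tendsto (fun k => ‖1 - h (φ k c')‖) atTop (nhds 0) := by
    have h1 : Tendsto (fun k => φ k c') atTop (nhdsWithin p (closure (Metric.ball p r ∩ D))) := by
      rw [tendsto_nhdsWithin_iff]
      refine ⟨htc', ?_⟩
      filter_upwards [htc' (Metric.ball_mem_nhds p hr)] with k hk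
      exact subset_closure ⟨hk, hφmaps k hc'D⟩
    have h2 : Tendsto (fun k => h (φ k c')) atTop (nhds 1) := by
      have h3 : Tendsto h (nhdsWithin p (closure (Metric.ball p r ∩ D))) (nhds (h p)) :=
        hcont p hpcl
      rw [hhp] at h3
      exact h3.comp h1
    have h4 : Tendsto (fun k => 1 - h (φ k c')) atTop (nhds 0) := by
      have h5 : Tendsto (fun _ : ℕ => (1:ℂ)) atTop (nhds 1) := tendsto_const_nhds
      simpa using h5.sub h2
    simpa using h4.norm
  rw [Metric.tendstoUniformlyOn_iff]
  intro ε hε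
  obtain ⟨b, hb1, hbP⟩ := hb ε hε
  have hev : ∀ᶠ k in atTop, dist (φ k c') p < r/2 ∧ 5 * ‖1 - h (φ k c')‖ < 1 - b := by
    have e1 := htc' (Metric.ball_mem_nhds p (half_pos hr))
    have e2 := hδ.eventually_lt_const (show (0:ℝ) < (1-b)/5 by linarith)
    filter_upwards [e1, e2] with k hk1 hk2
    refine ⟨by simpa [Metric.mem_ball] using hk1, by linarith⟩
  filter_upwards [hev] with k hk
  obtain ⟨hk1, hk2⟩ := hk
  intro z hz
  show dist p (φ k z) < ε
  rcases eq_or_ne z c' with rfl | hne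
  · have hmemc : φ k z ∈ closure (Metric.ball p r ∩ D) :=
      subset_closure ⟨by rw [Metric.mem_ball]; linarith, hφmaps k hc'D⟩
    have h5 : ‖1 - h (φ k z)‖ < 1 - b := by nlinarith [norm_nonneg (1 - h (φ k z))]
    have h6 : b < ‖h (φ k z)‖ := by
      have h7 := norm_sub_norm_le (1:ℂ) (h (φ k z))
      rw [norm_one] at h7
      linarith
    rw [dist_comm]
    exact hbP _ hmemc h6
  · set d' := dist z c' with hd'_def
    have hd'0 : 0 < d' := dist_pos.2 hne
    have hd'lt : d' < 2*t := by
      rw [Metric.mem_ball] at hz hc'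
      have h1 : dist c c' < t := by rw [dist_comm]; exact hc'
      calc d' ≤ dist z c + dist c c' := dist_triangle _ _ _
        _ < 2*t := by linarith [hz]
    set v : E := (Complex.ofReal (3*t/d')) • (z - c') with hv_def
    have hv_norm : ‖v‖ = 3*t := by
      rw [hv_def, norm_smul, Complex.norm_real, Real.norm_eq_abs, abs_of_pos (by positivity),
        ← dist_eq_norm, ← hd'_def]
      field_simp
    set lam : ℂ := Complex.ofReal (d' / (3*t)) with hlam_def
    have hlam_norm : ‖lam‖ ≤ 2/3 := by
      rw [hlam_def, Complex.norm_real, Real.norm_eq_abs, abs_of_pos (by positivity), div_le_iff₀ (by positivity)]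
      linarith
    have hlam_v : c' + lam • v = z := by
      rw [hlam_def, hv_def, smul_smul]
      rw [show (Complex.ofReal (d' / (3*t))) * (Complex.ofReal (3*t/d')) = Complex.ofReal ((d' / (3*t)) * (3*t/d')) by push_cast; ring]
      rw [show (d' / (3*t)) * (3*t/d') = 1 by field_simp]
      simp
    have hwmem : ∀ l ∈ Metric.ball (0:ℂ) 1, c' + l • v ∈ Metric.ball c (R/4) := by
      intro l hl
      rw [Metric.mem_ball, dist_zero_right] at hl
      have h1 : dist (c' + l • v) c' = ‖l • v‖ := by rw [dist_eq_norm]; congr 1; abel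
      have h2 : ‖l • v‖ ≤ 3*t := by
        rw [norm_smul, hv_norm]
        nlinarith [norm_nonneg l, ht0]
      rw [Metric.mem_ball]
      calc dist (c' + l • v) c ≤ dist (c' + l • v) c' + dist c' c := dist_triangle _ _ _
        _ < 3*t + t := by rw [h1]; exact add_lt_add_of_le_of_lt h2 hc'
        _ ≤ R/4 := by linarith
    have hφw : ∀ l ∈ Metric.ball (0:ℂ) 1, φ k (c' + l • v) ∈ Metric.ball p r ∩ D := by
      intro l hl
      have hwD : c' + l • v ∈ D := hR4D (hwmem l hl)
      have h2 := lip k (c' + l • v) (hwmem l hl) c' hc'4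
      have h3 : dist (c' + l • v) c' ≤ 3*t := by
        rw [dist_eq_norm, show c' + l • v - c' = l • v by abel, norm_smul, hv_norm]
        rw [Metric.mem_ball, dist_zero_right] at hl
        nlinarith [norm_nonneg l, ht0]
      have h4 : dist (φ k (c' + l • v)) (φ k c') ≤ 3 * (r/8) := by
        calc dist (φ k (c' + l • v)) (φ k c') ≤ L * dist (c' + l • v) c' := h2
          _ ≤ L * (3*t) := mul_le_mul_of_nonneg_left h3 hL0.le
          _ ≤ 3 * (r/8) := by linarith
      refine ⟨?_, hφmaps k hwD⟩
      rw [Metric.mem_ball]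
      calc dist (φ k (c' + l • v)) p ≤ dist (φ k (c' + l • v)) (φ k c') + dist (φ k c') p :=
          dist_triangle _ _ _
        _ < 3*(r/8) + r/2 := by linarith
        _ < r := by linarith
    set f : ℂ → ℂ := fun l => h (φ k (c' + l • v)) with hf_def
    have hfd : DifferentiableOn ℂ f (Metric.ball 0 1) := by
      have hg : DifferentiableOn ℂ (fun l : ℂ => φ k (c' + l • v)) (Metric.ball 0 1) :=
        (hφhol k).comp ((differentiable_id.smul_const v).const_add c').differentiableOn
          (fun l hl => hR4D (hwmem l hl))
      exact hhol.comp hg (fun l hl => hφw l hl)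
    have hflt : ∀ l ∈ Metric.ball (0:ℂ) 1, ‖f l‖ < 1 := by
      intro l hl
      refine hpeak _ (subset_closure (hφw l hl)) ?_
      intro hpe
      exact hpD (hpe ▸ (hφw l hl).2)
    have hlam_ball : lam ∈ Metric.ball (0:ℂ) 1 := by
      rw [Metric.mem_ball, dist_zero_right]; linarith
    have hest := disk_est hfd hflt hlam_ball
    have hf0 : f 0 = h (φ k c') := by rw [hf_def]; simp
    have hflam : f lam = h (φ k z) := by rw [hf_def]; simp only; rw [hlam_v]
    rw [hf0, hflam] at hest
    have h7 : ‖1 - h (φ k z)‖ ≤ 5 * ‖1 - h (φ k c')‖ := by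
      nlinarith [norm_nonneg (1 - h (φ k z)), norm_nonneg (1 - h (φ k c')), norm_nonneg lam]
    have hmemz : φ k z ∈ closure (Metric.ball p r ∩ D) := by
      rw [← hlam_v]
      exact subset_closure (hφw lam hlam_ball)
    have h8 : b < ‖h (φ k z)‖ := by
      have h9 := norm_sub_norm_le (1:ℂ) (h (φ k z))
      rw [norm_one] at h9
      linarith
    rw [dist_comm]
    exact hbP _ hmemz h8


/-- If `p ∈ ∂D` admits a local peak function on `B ∩ D` and `φ_k` are
automorphisms of the bounded domain `D` with `φ_k(a₀) → p`, then `φ_k → p` uniformly on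
compact subsets of `D`. -/
theorem stmt5 {n : ℕ} (D : Set (EuclideanSpace ℂ (Fin n)))
    (hopen : IsOpen D) (hconn : IsConnected D) (hbdd : Bornology.IsBounded D)
    (p : EuclideanSpace ℂ (Fin n)) (hp : p ∈ frontier D)
    (r : ℝ) (hr : 0 < r)
    (h : EuclideanSpace ℂ (Fin n) → ℂ)
    (hhol : DifferentiableOn ℂ h (Metric.ball p r ∩ D))
    (hcont : ContinuousOn h (closure (Metric.ball p r ∩ D)))
    (hhp : h p = 1)
    (hpeak : ∀ z ∈ closure (Metric.ball p r ∩ D), z ≠ p → ‖h z‖ < 1)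
    (a₀ : EuclideanSpace ℂ (Fin n)) (ha₀ : a₀ ∈ D)
    (φ ψ : ℕ → EuclideanSpace ℂ (Fin n) → EuclideanSpace ℂ (Fin n))
    (hφhol : ∀ k, DifferentiableOn ℂ (φ k) D)
    (hψhol : ∀ k, DifferentiableOn ℂ (ψ k) D)
    (hφmaps : ∀ k, Set.MapsTo (φ k) D D) (hψmaps : ∀ k, Set.MapsTo (ψ k) D D)
    (hinv₁ : ∀ k, ∀ z ∈ D, ψ k (φ k z) = z)
    (hinv₂ : ∀ k, ∀ z ∈ D, φ k (ψ k z) = z)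
    (hlim : Tendsto (fun k => φ k a₀) atTop (nhds p)) :
    ∀ K ⊆ D, IsCompact K →
      TendstoUniformlyOn (fun k => φ k) (fun _ => p) atTop K := by
  classical
  have hpD : p ∉ D := by
    intro hc
    exact hp.2 (by rwa [hopen.interior_eq])
  have hpcl : p ∈ closure (Metric.ball p r ∩ D) := by
    have h1 : p ∈ closure D := hp.1
    rw [mem_closure_iff_nhds] at h1 ⊢
    intro U hU
    obtain ⟨x, hx⟩ := h1 (U ∩ Metric.ball p r) (Filter.inter_mem hU (Metric.ball_mem_nhds p hr))
    exact ⟨x, hx.1.1, hx.1.2, hx.2⟩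
  obtain ⟨M0, hM0⟩ := (Metric.isBounded_iff_subset_ball 0).1 hbdd
  set M := max M0 1 with hM_def
  have hM1 : (1:ℝ) ≤ M := le_max_right _ _
  have hMD : D ⊆ Metric.ball 0 M := hM0.trans (Metric.ball_subset_ball (le_max_left _ _))
  have bclaim : ∀ ε > 0, ∃ b < (1:ℝ), ∀ w ∈ closure (Metric.ball p r ∩ D),
      b < ‖h w‖ → dist w p < ε := by
    intro ε hε
    set S := closure (Metric.ball p r ∩ D) \ Metric.ball p ε with hS_def
    have hSclosed : IsClosed S := by
      rw [hS_def, diff_eq]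
      exact isClosed_closure.inter isOpen_ball.isClosed_compl
    have hSbdd : Bornology.IsBounded S :=
      (Metric.isBounded_ball (x := p) (r := r)).closure.subset
        (diff_subset.trans (closure_mono inter_subset_left))
    have hScomp : IsCompact S := Metric.isCompact_of_isClosed_isBounded hSclosed hSbdd
    rcases S.eq_empty_or_nonempty with hSe | hSne
    · refine ⟨0, one_pos, fun w hw _ => ?_⟩
      by_contra hcon
      have : w ∈ S := ⟨hw, by simpa [Metric.mem_ball] using hcon⟩
      rw [hSe] at this
      exact this
    · obtain ⟨w₀, hw₀S, hmax⟩ := hScomp.exists_isMaxOn hSne ((hcont.mono diff_subset).norm)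
      refine ⟨‖h w₀‖, ?_, ?_⟩
      · refine hpeak w₀ hw₀S.1 ?_
        intro hwp
        exact hw₀S.2 (by simp [hwp, Metric.mem_ball, hε])
      · intro w hw hbw
        by_contra hcon
        have hwS : w ∈ S := ⟨hw, by simpa [Metric.mem_ball] using hcon⟩
        exact (hmax hwS).not_gt hbw
  have key : ∀ c ∈ D, ∃ t, 0 < t ∧ Metric.ball c t ⊆ D ∧
      ∀ c' ∈ Metric.ball c t, Tendsto (fun k => φ k c') atTop (nhds p) →
        TendstoUniformlyOn (fun k => φ k) (fun _ => p) atTop (Metric.ball c t) :=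
    fun c hcD => key_lemma hopen hpD hr hhol hcont hpcl hhp hpeak bclaim hM1 hMD hφhol hφmaps hcD
  choose! t ht0 htD hkey using key
  set A := {c | c ∈ D ∧ Tendsto (fun k => φ k c) atTop (nhds p)} with hA_def
  have hsubA : ∀ c ∈ D, ∀ x ∈ A, x ∈ Metric.ball c (t c) → Metric.ball c (t c) ⊆ A := by
    intro c hc x hxA hxball y hy
    have huni := hkey c hc x hxball hxA.2
    exact ⟨htD c hc hy, by simpa using huni.tendsto_at hy⟩
  have hDA : D ⊆ A := by
    set u := ⋃ c ∈ A, Metric.ball c (t c) with hu_def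
    set v := ⋃ c ∈ D \ A, Metric.ball c (t c) with hv_def
    have hu : IsOpen u := isOpen_biUnion (fun _ _ => Metric.isOpen_ball)
    have hv : IsOpen v := isOpen_biUnion (fun _ _ => Metric.isOpen_ball)
    have hdisj : Disjoint u v := by
      rw [Set.disjoint_left]
      intro x hxu hxv
      obtain ⟨c1, hc1A, hx1⟩ := mem_iUnion₂.1 hxu
      obtain ⟨c2, hc2, hx2⟩ := mem_iUnion₂.1 hxv
      have hxA : x ∈ A := hsubA c1 hc1A.1 c1 hc1A (Metric.mem_ball_self (ht0 c1 hc1A.1)) hx1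
      have hc2A : c2 ∈ A := hsubA c2 hc2.1 x hxA hx2 (Metric.mem_ball_self (ht0 c2 hc2.1))
      exact hc2.2 hc2A
    have hcover : D ⊆ u ∪ v := by
      intro c hc
      by_cases hcA : c ∈ A
      · exact Or.inl (mem_iUnion₂.2 ⟨c, hcA, Metric.mem_ball_self (ht0 c hc)⟩)
      · exact Or.inr (mem_iUnion₂.2 ⟨c, ⟨hc, hcA⟩, Metric.mem_ball_self (ht0 c hc)⟩)
    have hne : (D ∩ u).Nonempty :=
      ⟨a₀, ha₀, mem_iUnion₂.2 ⟨a₀, ⟨ha₀, hlim⟩, Metric.mem_ball_self (ht0 a₀ ha₀)⟩⟩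
    have hDu := hconn.isPreconnected.subset_left_of_subset_union hu hv hdisj hcover hne
    intro c hc
    obtain ⟨c1, hc1A, hx1⟩ := mem_iUnion₂.1 (hDu hc)
    exact hsubA c1 hc1A.1 c1 hc1A (Metric.mem_ball_self (ht0 c1 hc1A.1)) hx1
  intro K hKD hK
  obtain ⟨s, hsK, hcov⟩ := hK.elim_nhds_subcover (fun x => Metric.ball x (t x))
    (fun x hx => Metric.ball_mem_nhds x (ht0 x (hKD hx)))
  rw [Metric.tendstoUniformlyOn_iff]
  intro ε hε
  have hev : ∀ x ∈ s, ∀ᶠ k in atTop,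
      ∀ z ∈ Metric.ball x (t x), dist ((fun _ => p) z) (φ k z) < ε := by
    intro x hx
    have hxD := hKD (hsK x hx)
    have huni := hkey x hxD x (Metric.mem_ball_self (ht0 x hxD)) (hDA hxD).2
    rw [Metric.tendstoUniformlyOn_iff] at huni
    exact huni ε hε
  filter_upwards [(eventually_all_finset s).2 hev] with k hk z hz
  obtain ⟨x, hxs, hzx⟩ := mem_iUnion₂.1 (hcov hz)
  exact hk x hxs z hzx
end

section
/- Let D₁, D₂ ⊂ ℂⁿ be bounded balanced domains, and let G_m : D₁ → closure(D₂) be a sequence of holomorphic maps converging uniformly on compact subsets to a holomorphic map G with G(0) = 0. Suppose each G_m(0) = 0, each derivative G_m'(0) is invertible, and suppose D₂ is convex and that for every s ∈ ℤ₊ there exists M_s such that for all m ≥ M_s, G_m'(0) maps (1−1/s)D₁ into D₂ and G_m'(0)⁻¹ maps (1−1/s)D₂ into D₁. Then G'(0) is invertible. -/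
open Filter Topology

/-- Under locally uniform convergence `G_m → G` with `G_m(0) = G(0) = 0`,
invertible derivatives `G_m'(0)`, and the hypothesis that for every `s` and all large `m`,
`G_m'(0)` maps `(1-1/s)D₁` into `D₂` and `G_m'(0)⁻¹` maps `(1-1/s)D₂` into `D₁`,
the limit derivative `G'(0)` is invertible. -/
theorem stmt7 {n : ℕ} (D₁ D₂ : Set (EuclideanSpace ℂ (Fin n)))
    (h1open : IsOpen D₁) (h1conn : IsConnected D₁) (h1bdd : Bornology.IsBounded D₁)
    (h1bal : ∀ z ∈ D₁, ∀ ζ : ℂ, ‖ζ‖ ≤ 1 → ζ • z ∈ D₁)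
    (h2open : IsOpen D₂) (h2conn : IsConnected D₂) (h2bdd : Bornology.IsBounded D₂)
    (h2bal : ∀ w ∈ D₂, ∀ ζ : ℂ, ‖ζ‖ ≤ 1 → ζ • w ∈ D₂)
    (h2conv : Convex ℝ D₂)
    (G : ℕ → EuclideanSpace ℂ (Fin n) → EuclideanSpace ℂ (Fin n))
    (g : EuclideanSpace ℂ (Fin n) → EuclideanSpace ℂ (Fin n))
    (hGhol : ∀ m, DifferentiableOn ℂ (G m) D₁)
    (hGmaps : ∀ m, Set.MapsTo (G m) D₁ (closure D₂))
    (hG0 : ∀ m, G m 0 = 0)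
    (hghol : DifferentiableOn ℂ g D₁) (hg0 : g 0 = 0)
    (hconv : ∀ K ⊆ D₁, IsCompact K →
      TendstoUniformlyOn (fun m => G m) g atTop K)
    (T : ℕ → EuclideanSpace ℂ (Fin n) →L[ℂ] EuclideanSpace ℂ (Fin n))
    (hTleft : ∀ m x, T m (fderiv ℂ (G m) 0 x) = x)
    (hTright : ∀ m x, fderiv ℂ (G m) 0 (T m x) = x)
    (hscale : ∀ s : ℕ, 0 < s → ∃ M : ℕ, ∀ m ≥ M,
      (∀ z ∈ D₁, fderiv ℂ (G m) 0 ((1 - 1 / (s : ℝ)) • z) ∈ D₂) ∧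
      (∀ w ∈ D₂, T m ((1 - 1 / (s : ℝ)) • w) ∈ D₁)) :
    Function.Bijective (fderiv ℂ g 0) := by
  classical
  -- 0 belongs to both domains
  obtain ⟨z₁, hz₁⟩ := h1conn.nonempty
  obtain ⟨w₂, hw₂⟩ := h2conn.nonempty
  obtain ⟨M₁, hM₁⟩ := hscale 1 one_pos
  have h0D₂ : (0 : EuclideanSpace ℂ (Fin n)) ∈ D₂ := by
    have h := (hM₁ M₁ le_rfl).1 z₁ hz₁
    norm_num at h
    exact h
  have h0D₁ : (0 : EuclideanSpace ℂ (Fin n)) ∈ D₁ := by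
    have h := (hM₁ M₁ le_rfl).2 w₂ hw₂
    norm_num at h
    exact h
  -- radius bounds
  obtain ⟨R, hRpos, hRsub⟩ := h1bdd.subset_closedBall_lt 0 0
  obtain ⟨r, hrpos, hrsub⟩ := Metric.isOpen_iff.mp h2open 0 h0D₂
  obtain ⟨ρ, hρpos, hρsub⟩ := Metric.isOpen_iff.mp h1open 0 h0D₁
  obtain ⟨M₂, hM₂⟩ := hscale 2 two_pos
  -- uniform bound on T m for m ≥ M₂
  have hTbound : ∀ m ≥ M₂, ∀ y : EuclideanSpace ℂ (Fin n), ‖T m y‖ ≤ (4 * R / r) * ‖y‖ := by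
    intro m hm y
    rcases eq_or_ne y 0 with rfl | hy
    · simp
    have hny : 0 < ‖y‖ := norm_pos_iff.mpr hy
    set c : ℂ := ((r / (2 * ‖y‖) : ℝ) : ℂ) with hc
    have hcpos : (0 : ℝ) < r / (2 * ‖y‖) := by positivity
    have hw : c • y ∈ D₂ := by
      apply hrsub
      simp only [Metric.mem_ball, dist_zero_right, norm_smul, hc, Complex.norm_real,
        Real.norm_eq_abs, abs_of_pos hcpos]
      rw [div_mul_eq_mul_div, mul_comm, mul_div_assoc]
      calc ‖y‖ * (r / (2 * ‖y‖)) = r / 2 := by field_simp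
        _ < r := by linarith
    have hmem := (hM₂ m hm).2 (c • y) hw
    have h12 : (1 - 1 / ((2 : ℕ) : ℝ)) = (1 / 2 : ℝ) := by norm_num
    rw [h12] at hmem
    have heq : ((1 / 2 : ℝ)) • (c • y) = (((1 / 2 : ℝ) : ℂ) * c) • y := by
      rw [← smul_assoc, Complex.real_smul]
    rw [heq, map_smul] at hmem
    have hbd : ‖(((1 / 2 : ℝ) : ℂ) * c) • T m y‖ ≤ R := by
      have := hRsub hmem
      simpa [Metric.mem_closedBall, dist_zero_right] using this
    have hnorm : ‖(((1 / 2 : ℝ) : ℂ) * c)‖ = r / (4 * ‖y‖) := by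
      rw [norm_mul, hc, Complex.norm_real, Complex.norm_real, Real.norm_eq_abs,
        Real.norm_eq_abs, abs_of_pos hcpos, abs_of_pos (by norm_num : (0:ℝ) < 1/2)]
      ring
    rw [norm_smul, hnorm] at hbd
    have hr4 : 0 < r / (4 * ‖y‖) := by positivity
    have hle : ‖T m y‖ ≤ R / (r / (4 * ‖y‖)) :=
      (le_div_iff₀ hr4).mpr (by rw [mul_comm] at hbd; exact hbd)
    calc ‖T m y‖ ≤ R / (r / (4 * ‖y‖)) := hle
      _ = (4 * R / r) * ‖y‖ := by rw [div_div_eq_mul_div]; ring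
  -- reduce to injectivity
  have hinj : Function.Injective (fderiv ℂ g 0) := by
    rw [injective_iff_map_eq_zero]
    intro z hz
    by_contra hz0
    have hnz : 0 < ‖z‖ := norm_pos_iff.mpr hz0
    set t : ℂ := ((ρ / (2 * ‖z‖) : ℝ) : ℂ) with ht
    have htpos : (0 : ℝ) < ρ / (2 * ‖z‖) := by positivity
    set u : EuclideanSpace ℂ (Fin n) := t • z with hu
    have hnu : ‖u‖ = ρ / 2 := by
      simp only [hu, norm_smul, ht, Complex.norm_real, Real.norm_eq_abs, abs_of_pos htpos]
      field_simp
    -- the 1-variable restriction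
    set φ : ℂ → EuclideanSpace ℂ (Fin n) := fun ζ => ζ • u with hφ
    have hφD : ∀ ζ ∈ Metric.ball (0 : ℂ) 2, φ ζ ∈ D₁ := by
      intro ζ hζ
      apply hρsub
      simp only [Metric.mem_ball, dist_zero_right] at hζ ⊢
      rw [hφ]
      simp only [norm_smul, hnu]
      nlinarith [norm_nonneg ζ]
    have hφdiff : Differentiable ℂ φ := differentiable_id.smul_const u
    have hFdiff : ∀ m : ℕ, DifferentiableOn ℂ ((G m) ∘ φ) (Metric.ball (0 : ℂ) 2) := by
      intro m
      exact (hGhol m).comp hφdiff.differentiableOn hφD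
    have hTLU : TendstoLocallyUniformlyOn (fun m => (G m) ∘ φ) (g ∘ φ) atTop
        (Metric.ball (0 : ℂ) 2) := by
      rw [tendstoLocallyUniformlyOn_iff_forall_isCompact Metric.isOpen_ball]
      intro K hK hKc
      have hK' : IsCompact (φ '' K) := hKc.image (hφdiff.continuous)
      have hK'sub : φ '' K ⊆ D₁ := by
        rintro - ⟨ζ, hζ, rfl⟩
        exact hφD ζ (hK hζ)
      have := (hconv (φ '' K) hK'sub hK').comp φ
      exact this.mono (fun ζ hζ => Set.mem_preimage.mpr ⟨ζ, hζ, rfl⟩)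
    have hderivTLU := hTLU.deriv (Eventually.of_forall hFdiff) Metric.isOpen_ball
    have h0mem : (0 : ℂ) ∈ Metric.ball (0 : ℂ) 2 := by
      simp [Metric.mem_ball]
    have htend := hderivTLU.tendsto_at h0mem
    -- identify the derivatives
    have hφ0 : φ 0 = 0 := by simp [hφ]
    have hφderiv : HasDerivAt φ u 0 := by
      simpa using (hasDerivAt_id (0 : ℂ)).smul_const u
    have hderivF : ∀ m : ℕ, deriv ((G m) ∘ φ) 0 = fderiv ℂ (G m) 0 u := by
      intro m
      have hGm : HasFDerivAt (G m) (fderiv ℂ (G m) 0) (φ 0) := by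
        rw [hφ0]
        exact ((hGhol m).differentiableAt (h1open.mem_nhds h0D₁)).hasFDerivAt
      have := hGm.comp_hasDerivAt 0 hφderiv
      simpa using this.deriv
    have hderivf : deriv (g ∘ φ) 0 = 0 := by
      have hgd : HasFDerivAt g (fderiv ℂ g 0) (φ 0) := by
        rw [hφ0]
        exact (hghol.differentiableAt (h1open.mem_nhds h0D₁)).hasFDerivAt
      have h := (hgd.comp_hasDerivAt 0 hφderiv).deriv
      have hAu : fderiv ℂ g 0 u = 0 := by
        rw [hu, map_smul, hz, smul_zero]
      simpa [hAu] using h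
    simp only [Function.comp] at htend
    rw [hderivf] at htend
    have htend' : Tendsto (fun m => ‖fderiv ℂ (G m) 0 u‖) atTop (𝓝 0) := by
      have : Tendsto (fun m => ‖deriv ((G m) ∘ φ) 0‖) atTop (𝓝 ‖(0 : EuclideanSpace ℂ (Fin n))‖) := htend.norm
      simp only [norm_zero] at this
      refine this.congr (fun m => ?_)
      rw [← hderivF m]
    -- derive the contradiction
    have hC : 0 < 4 * R / r := by positivity
    have hε : 0 < (ρ / 2) / (4 * R / r) := by positivity
    have hev := (htend'.eventually (gt_mem_nhds hε)).and (eventually_ge_atTop M₂)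
    obtain ⟨m, hlt, hm⟩ := hev.exists
    have hub : ‖u‖ ≤ (4 * R / r) * ‖fderiv ℂ (G m) 0 u‖ := by
      have := hTbound m hm (fderiv ℂ (G m) 0 u)
      rwa [hTleft m u] at this
    rw [hnu] at hub
    have : (4 * R / r) * ‖fderiv ℂ (G m) 0 u‖ < (4 * R / r) * ((ρ / 2) / (4 * R / r)) :=
      mul_lt_mul_of_pos_left hlt hC
    rw [mul_div_cancel₀ _ (ne_of_gt hC)] at this
    linarith
  refine ⟨hinj, ?_⟩
  have := (LinearMap.injective_iff_surjective
    (f := ((fderiv ℂ g 0 : EuclideanSpace ℂ (Fin n) →L[ℂ] EuclideanSpace ℂ (Fin n)) : EuclideanSpace ℂ (Fin n) →ₗ[ℂ] EuclideanSpace ℂ (Fin n)))).mp hinj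
  exact this
end

section
/- Let V be a finite-dimensional positive Hermitian Jordan triple system and let x ∈ V \ {0} have spectral decomposition x = λ₁e₁ + ⋯ + λ_s e_s with λ₁ > ⋯ > λ_s > 0 and e₁,…,e_s pairwise orthogonal nonzero tripotents. Then the map x ↦ λ₁(x), extended by λ₁(0) = 0, defines a norm on V (the spectral norm); in particular it is subadditive and satisfies λ₁(cx) = |c|λ₁(x) for c ∈ ℂ. -/
/-- A Hermitian Jordan triple system on a complex vector space `V`: a triple product
`{x,y,z}`, symmetric and `ℂ`-bilinear in `(x,z)`, conjugate-linear in `y`, satisfying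
the Jordan identity. -/
structure HJTS (V : Type*) [AddCommGroup V] [Module ℂ V] where
  trip : V → V → V → V
  symm : ∀ x y z, trip x y z = trip z y x
  add_left : ∀ x x' y z, trip (x + x') y z = trip x y z + trip x' y z
  smul_left : ∀ (a : ℂ) (x y z : V), trip (a • x) y z = a • trip x y z
  add_mid : ∀ x y y' z, trip x (y + y') z = trip x y z + trip x y' z
  smul_mid : ∀ (a : ℂ) (x y z : V), trip x (a • y) z = (starRingEnd ℂ a) • trip x y z
  jordan : ∀ x y u v w,
    trip x y (trip u v w) - trip u v (trip x y w)
      = trip (trip x y u) v w - trip u (trip y x v) w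

variable {V : Type*} [AddCommGroup V] [Module ℂ V]

/-- Positivity: `{x,x,x} = λx` with `x ≠ 0` forces `λ > 0`. -/
def HJTS.IsPositive (J : HJTS V) : Prop :=
  ∀ x : V, x ≠ 0 → ∀ c : ℝ, J.trip x x x = (c : ℂ) • x → 0 < c

/-- A tripotent: `{e,e,e} = 2e` (i.e. `Q(e)e = e` with `Q(x)y := {x,y,x}/2`). -/
def HJTS.IsTripotent (J : HJTS V) (e : V) : Prop :=
  J.trip e e e = (2 : ℂ) • e

/-- Orthogonality of tripotents: `D(e₁,e₂) = 0` where `D(x,y)z := {x,y,z}`. -/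
def HJTS.Orthog (J : HJTS V) (e₁ e₂ : V) : Prop :=
  ∀ z : V, J.trip e₁ e₂ z = 0

set_option linter.unusedSectionVars false

namespace Stmt15Aux

variable (J : HJTS V) [FiniteDimensional ℂ V]

lemma add_right (x y z z' : V) :
    J.trip x y (z + z') = J.trip x y z + J.trip x y z' := by
  rw [J.symm, J.add_left, J.symm, J.symm z']

lemma smul_right (a : ℂ) (x y z : V) : J.trip x y (a • z) = a • J.trip x y z := by
  rw [J.symm, J.smul_left, J.symm]

/-- `D(x,y)` as a `ℂ`-linear endomorphism. -/
def Dop (x y : V) : Module.End ℂ V where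
  toFun z := J.trip x y z
  map_add' z z' := add_right J x y z z'
  map_smul' a z := smul_right J a x y z

@[simp] lemma Dop_apply (x y z : V) : Dop J x y z = J.trip x y z := rfl

lemma trip_sub_right (x y z z' : V) :
    J.trip x y (z - z') = J.trip x y z - J.trip x y z' :=
  (Dop J x y).map_sub z z'

lemma Dop_add_left (x x' y : V) : Dop J (x + x') y = Dop J x y + Dop J x' y := by
  ext z; simp [J.add_left]

lemma Dop_smul_left (a : ℂ) (x y : V) : Dop J (a • x) y = a • Dop J x y := by
  ext z; simp [J.smul_left]

lemma Dop_add_mid (x y y' : V) : Dop J x (y + y') = Dop J x y + Dop J x y' := by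
  ext z; simp [J.add_mid]

lemma Dop_smul_mid (a : ℂ) (x y : V) :
    Dop J x (a • y) = (starRingEnd ℂ a) • Dop J x y := by
  ext z; simp [J.smul_mid]

lemma jordan_op (x y u v : V) :
    Dop J x y * Dop J u v - Dop J u v * Dop J x y
      = Dop J (J.trip x y u) v - Dop J u (J.trip y x v) := by
  ext w
  simpa using J.jordan x y u v w


/-- The trace form. Linear in the first slot, conjugate-linear in the second. -/
noncomputable def B (x y : V) : ℂ := LinearMap.trace ℂ V (Dop J x y)

lemma B_assoc (a b x y : V) : B J (J.trip a b x) y = B J x (J.trip b a y) := by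
  have h := congrArg (LinearMap.trace ℂ V) (jordan_op J a b x y)
  rw [map_sub, map_sub] at h
  rw [LinearMap.trace_mul_comm] at h
  simp only [sub_self] at h
  unfold B
  linear_combination -h

lemma B_add_left (x x' y : V) : B J (x + x') y = B J x y + B J x' y := by
  rw [B, Dop_add_left, map_add]; rfl

lemma B_smul_left (a : ℂ) (x y : V) : B J (a • x) y = a * B J x y := by
  rw [B, Dop_smul_left, map_smul]; rfl

lemma B_smul_right (a : ℂ) (x y : V) : B J x (a • y) = (starRingEnd ℂ a) * B J x y := by
  rw [B, Dop_smul_mid, map_smul]; rfl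

lemma B_sum_left {n : ℕ} (f : Fin n → V) (y : V) :
    B J (∑ i, f i) y = ∑ i, B J (f i) y := by
  induction n with
  | zero =>
      simp only [Finset.univ_eq_empty, Finset.sum_empty]
      have : Dop J (0 : V) y = 0 := by
        ext z; simpa using congrArg (fun w => w) (by
          have := J.smul_left 0 0 y z; simpa using this)
      simp [B, this]
  | succ n ih =>
      rw [Fin.sum_univ_succ, Fin.sum_univ_succ, B_add_left, ih (fun i => f i.succ)]

lemma B_zero_left (y : V) : B J 0 y = 0 := by
  have : Dop J (0 : V) y = 0 := by
    ext z; have := J.smul_left 0 0 y z; simpa using this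
  simp [B, this]

lemma B_sum_right {n : ℕ} (x : V) (f : Fin n → V) :
    B J x (∑ i, f i) = ∑ i, B J x (f i) := by
  induction n with
  | zero =>
      simp only [Finset.univ_eq_empty, Finset.sum_empty]
      have : Dop J x (0 : V) = 0 := by
        ext z; have := J.smul_mid 0 x 0 z; simpa using this
      simp [B, this]
  | succ n ih =>
      rw [Fin.sum_univ_succ, Fin.sum_univ_succ, B, Dop_add_mid, map_add, ← B, ← B,
        ih (fun i => f i.succ)]

section Tripotent

variable {e : V} (he : J.IsTripotent e)

include he

lemma L_P (z : V) :
    J.trip e e (J.trip e z e) = (2:ℂ) • J.trip e z e := by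
  have h1 := J.jordan e e e z e
  have h2 := J.jordan e z e e e
  rw [he, smul_right, J.smul_left] at h1
  rw [he, smul_right, J.symm (J.trip e z e) e e, J.symm z e e] at h2
  have h' : (3:ℂ) • J.trip e e (J.trip e z e)
      = (3:ℂ) • ((2:ℂ) • J.trip e z e) := by
    linear_combination (norm := module) h1 - h2
  exact smul_right_injective V (by norm_num : (3:ℂ) ≠ 0) h'

lemma P_L (z : V) :
    J.trip e (J.trip e e z) e = (2:ℂ) • J.trip e z e := by
  have h1 := J.jordan e e e z e
  rw [he, smul_right, J.smul_left] at h1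
  -- h1 : L (P z) - 2 • P z = 2 • P z - P (L z)
  have hLP := L_P J he z
  linear_combination (norm := module) h1 - hLP

lemma P_P (w : V) :
    J.trip e (J.trip e w e) e
      = (2:ℂ) • J.trip e e (J.trip e e w) - (2:ℂ) • J.trip e e w := by
  have h := J.jordan w e e e e
  rw [he, smul_right, J.symm w e e, J.symm (J.trip e e w) e e] at h
  linear_combination (norm := module) h

lemma cubic (w : V) :
    J.trip e e (J.trip e e (J.trip e e w))
      = (3:ℂ) • J.trip e e (J.trip e e w) - (2:ℂ) • J.trip e e w := by
  have h1 := L_P J he (J.trip e w e)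
  rw [P_P J he w] at h1
  have hsub : ∀ u v : V, J.trip e e (u - v) = J.trip e e u - J.trip e e v :=
    fun u v => (Dop J e e).map_sub u v
  have hsm : ∀ (a : ℂ) (u : V), J.trip e e (a • u) = a • J.trip e e u :=
    fun a u => smul_right J a e e u
  rw [hsub, hsm, hsm] at h1
  have h' : (2:ℂ) • J.trip e e (J.trip e e (J.trip e e w))
      = (2:ℂ) • ((3:ℂ) • J.trip e e (J.trip e e w) - (2:ℂ) • J.trip e e w) := by
    linear_combination (norm := module) h1
  exact smul_right_injective V (by norm_num : (2:ℂ) ≠ 0) h'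

end Tripotent

section Tripotent2

variable {e : V} (he : J.IsTripotent e)

/-- Peirce projection onto the 1-eigenspace of `D(e,e)`. -/
noncomputable def q1 : Module.End ℂ V :=
  (2:ℂ) • Dop J e e - Dop J e e * Dop J e e

/-- Peirce projection onto the 2-eigenspace of `D(e,e)`. -/
noncomputable def q2 : Module.End ℂ V :=
  (2⁻¹:ℂ) • (Dop J e e * Dop J e e - Dop J e e)

lemma q1_apply (v : V) :
    q1 J (e := e) v = (2:ℂ) • J.trip e e v - J.trip e e (J.trip e e v) := rfl

lemma q2_apply (v : V) :
    q2 J (e := e) v = (2⁻¹:ℂ) • (J.trip e e (J.trip e e v) - J.trip e e v) := rfl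

lemma q_decomp (v : V) :
    q1 J (e := e) v + (2:ℂ) • q2 J (e := e) v = J.trip e e v := by
  rw [q1_apply, q2_apply]
  module

include he

lemma L_q1 (v : V) : J.trip e e (q1 J (e := e) v) = q1 J (e := e) v := by
  rw [q1_apply, trip_sub_right, smul_right, cubic J he v]
  linear_combination (norm := module) (0:ℂ) • he

lemma L_q2 (v : V) : J.trip e e (q2 J (e := e) v) = (2:ℂ) • q2 J (e := e) v := by
  rw [q2_apply, smul_right, trip_sub_right, cubic J he v]
  linear_combination (norm := module) (0:ℂ) • he

lemma q1_idem : q1 J (e := e) * q1 J (e := e) = q1 J (e := e) := by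
  ext v
  have h := L_q1 J he v
  simp only [Module.End.mul_apply]
  rw [q1_apply J (v := q1 J (e := e) v), h, h]
  module

lemma q2_idem : q2 J (e := e) * q2 J (e := e) = q2 J (e := e) := by
  ext v
  have h := L_q2 J he v
  simp only [Module.End.mul_apply]
  rw [q2_apply J (v := q2 J (e := e) v), h, smul_right, h]
  module

omit he in
lemma trace_idem (f : Module.End ℂ V) (hf : f * f = f) :
    LinearMap.trace ℂ V f = (Module.finrank ℂ (LinearMap.range f) : ℂ) := by
  have hproj : LinearMap.IsProj (LinearMap.range f) f := by
    constructor
    · intro x; exact ⟨x, rfl⟩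
    · rintro x ⟨y, rfl⟩
      exact congrFun (congrArg (fun g => g.toFun) hf) y
  exact hproj.trace

lemma B_ee_nat : ∃ n : ℕ, B J e e = (n : ℂ) ∧ (e ≠ 0 → 2 ≤ n) := by
  have hL : Dop J e e = q1 J (e := e) + (2:ℂ) • q2 J (e := e) := by
    ext v
    exact (q_decomp J v).symm
  refine ⟨Module.finrank ℂ (LinearMap.range (q1 J (e := e)))
      + 2 * Module.finrank ℂ (LinearMap.range (q2 J (e := e))), ?_, ?_⟩
  · rw [B, hL, map_add, map_smul, trace_idem _ (q1_idem J he), trace_idem _ (q2_idem J he),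
      smul_eq_mul]
    push_cast
    ring
  · intro hne
    have hq2e : q2 J (e := e) e = e := by
      rw [q2_apply, he, smul_right, he]
      have : (2⁻¹:ℂ) • ((2:ℂ) • (2:ℂ) • e - (2:ℂ) • e) = e := by module
      exact this
    have h1 : 1 ≤ Module.finrank ℂ (LinearMap.range (q2 J (e := e))) := by
      have : 0 < Module.finrank ℂ (LinearMap.range (q2 J (e := e))) :=
        Module.finrank_pos_iff_exists_ne_zero.mpr
          ⟨⟨e, ⟨e, hq2e⟩⟩, fun h => hne (congrArg Subtype.val h)⟩
      omega
    omega

/-- The key quadratic bound for a single tripotent. -/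
lemma quad_bound (hB : ∀ w : V, 0 ≤ (B J w w).re ∧ (B J w w).im = 0) (v : V) :
    0 ≤ (B J (J.trip e e v) v).re ∧
      (B J (J.trip e e v) v).re ≤ 2 * (B J v v).re := by
  set v1 := q1 J (e := e) v with hv1
  set v2 := q2 J (e := e) v with hv2
  set v0 := v - v1 - v2 with hv0
  have hL1 : J.trip e e v1 = (1:ℂ) • v1 := by rw [L_q1 J he v]; module
  have hL2 : J.trip e e v2 = (2:ℂ) • v2 := L_q2 J he v
  have hLv : J.trip e e v = v1 + (2:ℂ) • v2 := (q_decomp J v).symm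
  have hL0 : J.trip e e v0 = (0:ℂ) • v0 := by
    rw [hv0, trip_sub_right, trip_sub_right, hLv, L_q1 J he v, hL2]
    module
  -- orthogonality of components
  have cross : ∀ (a b : ℂ) (w w' : V), J.trip e e w = a • w → J.trip e e w' = b • w' →
      a ≠ b → (starRingEnd ℂ b = b) → B J w w' = 0 := by
    intro a b w w' hw hw' hab hbr
    have h1 : a * B J w w' = b * B J w w' := by
      have := B_assoc J e e w w'
      rwa [hw, hw', B_smul_left, B_smul_right, hbr] at this
    by_contra hne
    exact hab (mul_right_cancel₀ hne h1)
  have c01 : B J v0 v1 = 0 := cross 0 1 v0 v1 hL0 hL1 (by norm_num) (map_one _)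
  have c02 : B J v0 v2 = 0 := cross 0 2 v0 v2 hL0 hL2 (by norm_num) (map_ofNat _ 2)
  have c10 : B J v1 v0 = 0 := cross 1 0 v1 v0 hL1 hL0 (by norm_num) (map_zero _)
  have c12 : B J v1 v2 = 0 := cross 1 2 v1 v2 hL1 hL2 (by norm_num) (map_ofNat _ 2)
  have c20 : B J v2 v0 = 0 := cross 2 0 v2 v0 hL2 hL0 (by norm_num) (map_zero _)
  have c21 : B J v2 v1 = 0 := cross 2 1 v2 v1 hL2 hL1 (by norm_num) (map_one _)
  have hv : v = v0 + v1 + v2 := by rw [hv0]; abel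
  have hBvv : B J v v = B J v0 v0 + B J v1 v1 + B J v2 v2 := by
    conv_lhs => rw [hv]
    rw [B_add_left, B_add_left]
    rw [show B J v0 (v0 + v1 + v2) = B J v0 v0 + B J v0 v1 + B J v0 v2 by
      rw [B, Dop_add_mid, Dop_add_mid, map_add, map_add]; rfl]
    rw [show B J v1 (v0 + v1 + v2) = B J v1 v0 + B J v1 v1 + B J v1 v2 by
      rw [B, Dop_add_mid, Dop_add_mid, map_add, map_add]; rfl]
    rw [show B J v2 (v0 + v1 + v2) = B J v2 v0 + B J v2 v1 + B J v2 v2 by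
      rw [B, Dop_add_mid, Dop_add_mid, map_add, map_add]; rfl]
    rw [c01, c02, c10, c12, c20, c21]
    ring
  have hBLv : B J (J.trip e e v) v = B J v1 v1 + 2 * B J v2 v2 := by
    rw [hLv, B_add_left, B_smul_left]
    conv_lhs => rw [hv]
    rw [show B J v1 (v0 + v1 + v2) = B J v1 v0 + B J v1 v1 + B J v1 v2 by
      rw [B, Dop_add_mid, Dop_add_mid, map_add, map_add]; rfl]
    rw [show B J v2 (v0 + v1 + v2) = B J v2 v0 + B J v2 v1 + B J v2 v2 by
      rw [B, Dop_add_mid, Dop_add_mid, map_add, map_add]; rfl]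
    rw [c10, c12, c20, c21]
    ring
  obtain ⟨h0re, -⟩ := hB v0
  obtain ⟨h1re, -⟩ := hB v1
  obtain ⟨h2re, -⟩ := hB v2
  rw [hBLv, hBvv]
  have e1 : (B J v1 v1 + 2 * B J v2 v2).re = (B J v1 v1).re + 2 * (B J v2 v2).re := by
    simp [Complex.add_re, Complex.mul_re]
  have e2 : (B J v0 v0 + B J v1 v1 + B J v2 v2).re
      = (B J v0 v0).re + (B J v1 v1).re + (B J v2 v2).re := by
    simp [Complex.add_re]
  rw [e1, e2]
  constructor
  · linarith
  · linarith

end Tripotent2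

lemma trip_zero_left' (y z : V) : J.trip 0 y z = 0 := by
  have := J.smul_left 0 0 y z; simpa using this

lemma trip_zero_mid' (x z : V) : J.trip x 0 z = 0 := by
  have := J.smul_mid 0 x 0 z; simpa using this

lemma trip_sum_left {n : ℕ} (f : Fin n → V) (y z : V) :
    J.trip (∑ i, f i) y z = ∑ i, J.trip (f i) y z := by
  induction n with
  | zero => simp [trip_zero_left']
  | succ n ih =>
      rw [Fin.sum_univ_succ, Fin.sum_univ_succ, J.add_left, ih (fun i => f i.succ)]

lemma trip_sum_mid {n : ℕ} (x : V) (f : Fin n → V) (z : V) :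
    J.trip x (∑ i, f i) z = ∑ i, J.trip x (f i) z := by
  induction n with
  | zero => simp [trip_zero_mid']
  | succ n ih =>
      rw [Fin.sum_univ_succ, Fin.sum_univ_succ, J.add_mid, ih (fun i => f i.succ)]

lemma trip_sum_right {n : ℕ} (x y : V) (f : Fin n → V) :
    J.trip x y (∑ i, f i) = ∑ i, J.trip x y (f i) :=
  map_sum (Dop J x y) f Finset.univ

section Family

variable {n : ℕ} {ee : Fin n → V}

lemma trip_ortho_same (horth : ∀ i j, i ≠ j → J.Orthog (ee i) (ee j))
    {i j : Fin n} (hij : j ≠ i) : J.trip (ee i) (ee i) (ee j) = 0 := by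
  rw [J.symm]
  exact horth j i hij (ee i)

lemma trip_diag (horth : ∀ i j, i ≠ j → J.Orthog (ee i) (ee j))
    (c : Fin n → ℝ) (v : V) :
    J.trip (∑ i, (c i : ℂ) • ee i) (∑ i, (c i : ℂ) • ee i) v
      = ∑ i, ((c i : ℂ)^2) • J.trip (ee i) (ee i) v := by
  rw [trip_sum_left]
  refine Finset.sum_congr rfl fun i _ => ?_
  rw [J.smul_left, trip_sum_mid]
  rw [Finset.sum_eq_single i]
  · rw [J.smul_mid, Complex.conj_ofReal, smul_smul, sq]
  · intro j _ hji
    rw [J.smul_mid, horth i j (fun h => hji (h ▸ rfl)) v, smul_zero]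
  · intro h; exact absurd (Finset.mem_univ i) h

lemma sum_tripotent (htrip : ∀ i, J.IsTripotent (ee i))
    (horth : ∀ i j, i ≠ j → J.Orthog (ee i) (ee j)) :
    J.IsTripotent (∑ i, ee i) := by
  unfold HJTS.IsTripotent
  have key := trip_diag J horth (fun _ => 1) (∑ i, ee i)
  simp only [Complex.ofReal_one, one_smul, one_pow] at key
  rw [key, Finset.smul_sum]
  refine Finset.sum_congr rfl fun i _ => ?_
  rw [trip_sum_right, Finset.sum_eq_single i]
  · exact htrip i
  · intro j _ hji
    exact trip_ortho_same J horth (i := i) (j := j) hji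
  · intro h; exact absurd (Finset.mem_univ i) h

lemma B_orth {x y : V} (h : J.Orthog x y) : B J x y = 0 := by
  have : Dop J x y = 0 := by ext z; simpa using h z
  rw [B, this, map_zero]

/-- Claim A: the quadratic bound for a vector with an orthogonal decomposition. -/
lemma claimA (hB : ∀ w : V, 0 ≤ (B J w w).re ∧ (B J w w).im = 0)
    (htrip : ∀ i, J.IsTripotent (ee i))
    (horth : ∀ i j, i ≠ j → J.Orthog (ee i) (ee j))
    (c : Fin n → ℝ) (m : ℝ) (hm : 0 ≤ m) (hmax : ∀ i, (c i)^2 ≤ m) (v : V) :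
    0 ≤ (B J (J.trip (∑ i, (c i : ℂ) • ee i) (∑ i, (c i : ℂ) • ee i) v) v).re ∧
    (B J (J.trip (∑ i, (c i : ℂ) • ee i) (∑ i, (c i : ℂ) • ee i) v) v).re
      ≤ 2 * m * (B J v v).re := by
  rw [trip_diag J horth c v]
  have hterm : ∀ i : Fin n, B J (((c i : ℂ)^2) • J.trip (ee i) (ee i) v) v
      = (((c i)^2 : ℝ) : ℂ) * B J (J.trip (ee i) (ee i) v) v := by
    intro i
    rw [B_smul_left]
    push_cast
    ring
  rw [B_sum_left]
  simp only [hterm]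
  rw [Complex.re_sum]
  simp only [Complex.re_ofReal_mul]
  set t : Fin n → ℝ := fun i => (B J (J.trip (ee i) (ee i) v) v).re with ht
  have htn : ∀ i, 0 ≤ t i := fun i => (quad_bound J (htrip i) hB v).1
  have htsum : ∑ i, t i ≤ 2 * (B J v v).re := by
    have hu := quad_bound J (sum_tripotent J htrip horth) hB v
    have key := trip_diag J horth (fun _ => 1) v
    simp only [Complex.ofReal_one, one_smul, one_pow] at key
    rw [key, B_sum_left, Complex.re_sum] at hu
    exact hu.2
  constructor
  · exact Finset.sum_nonneg fun i _ => mul_nonneg (sq_nonneg _) (htn i)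
  · calc ∑ i, (c i)^2 * t i ≤ ∑ i, m * t i :=
          Finset.sum_le_sum fun i _ => mul_le_mul_of_nonneg_right (hmax i) (htn i)
    _ = m * ∑ i, t i := by rw [Finset.mul_sum]
    _ ≤ m * (2 * (B J v v).re) := mul_le_mul_of_nonneg_left htsum hm
    _ = 2 * m * (B J v v).re := by ring

/-- Claim B: sharpness at the top tripotent. -/
lemma claimB (htrip : ∀ i, J.IsTripotent (ee i))
    (horth : ∀ i j, i ≠ j → J.Orthog (ee i) (ee j))
    (c : Fin n → ℝ) (i0 : Fin n) :
    J.trip (∑ i, (c i : ℂ) • ee i) (∑ i, (c i : ℂ) • ee i) (ee i0)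
      = ((2:ℂ) * ((c i0 : ℂ))^2) • ee i0 := by
  rw [trip_diag J horth c (ee i0), Finset.sum_eq_single i0]
  · rw [htrip i0, smul_smul, mul_comm]
  · intro j _ hji
    rw [trip_ortho_same J horth (i := j) (j := i0) (Ne.symm hji), smul_zero]
  · intro h; exact absurd (Finset.mem_univ i0) h

end Family

/-- Positivity of the trace form on decomposable vectors. -/
lemma Bpos
    (hdec : ∀ x : V, x ≠ 0 → ∃ (s : ℕ) (l : Fin (s + 1) → ℝ) (e : Fin (s + 1) → V),
      (∀ i, 0 < l i) ∧ (∀ i, J.IsTripotent (e i) ∧ e i ≠ 0) ∧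
      (∀ i j, i ≠ j → J.Orthog (e i) (e j)) ∧ x = ∑ i, (l i : ℂ) • e i) :
    ∀ w : V, (0 ≤ (B J w w).re ∧ (B J w w).im = 0) ∧ (w ≠ 0 → 0 < (B J w w).re) := by
  intro w
  by_cases hw : w = 0
  · subst hw
    rw [B_zero_left]
    exact ⟨⟨le_refl _, rfl⟩, fun h => absurd rfl h⟩
  obtain ⟨s, l, e, hlpos, htrip, horth, hsum⟩ := hdec w hw
  choose N hN h2N using fun i => B_ee_nat J (he := (htrip i).1)
  have hBw : B J w w = ((∑ i, (l i)^2 * (N i : ℝ) : ℝ) : ℂ) := by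
    rw [hsum, B_sum_left]
    rw [Complex.ofReal_sum]
    refine Finset.sum_congr rfl fun i _ => ?_
    rw [B_smul_left, B_sum_right, Finset.sum_eq_single i]
    · rw [B_smul_right, Complex.conj_ofReal, hN i]
      push_cast
      ring
    · intro j _ hji
      rw [B_smul_right, B_orth J (horth i j (fun h => hji (h ▸ rfl))), mul_zero]
    · intro h; exact absurd (Finset.mem_univ i) h
  have hterm : ∀ i : Fin s.succ, 0 ≤ (l i)^2 * (N i : ℝ) :=
    fun i => mul_nonneg (sq_nonneg _) (Nat.cast_nonneg _)
  have hpos0 : 0 < (l 0)^2 * (N 0 : ℝ) := by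
    have h2 : (2:ℝ) ≤ (N 0 : ℝ) := by exact_mod_cast h2N 0 (htrip 0).2
    have := hlpos 0
    nlinarith
  constructor
  · constructor
    · rw [hBw, Complex.ofReal_re]
      exact Finset.sum_nonneg fun i _ => hterm i
    · rw [hBw, Complex.ofReal_im]
  · intro _
    rw [hBw, Complex.ofReal_re]
    have := Finset.sum_le_sum_of_subset_of_nonneg
      (Finset.singleton_subset_iff.mpr (Finset.mem_univ (0 : Fin s.succ)))
      (fun i _ _ => hterm i)
    calc (0:ℝ) < (l 0)^2 * (N 0 : ℝ) := hpos0
    _ = ∑ i ∈ {(0 : Fin s.succ)}, (l i)^2 * (N i : ℝ) := by rw [Finset.sum_singleton]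
    _ ≤ ∑ i, (l i)^2 * (N i : ℝ) := this

end Stmt15Aux


/-- In a finite-dimensional positive Hermitian Jordan triple system, the
map `x ↦ λ₁(x)` (largest coefficient in the spectral decomposition, with `λ₁(0) = 0`)
is a norm: it vanishes exactly at `0`, is absolutely homogeneous, and subadditive. -/
theorem stmt15 [FiniteDimensional ℂ V] (J : HJTS V) (hpos : J.IsPositive)
    (σ : V → ℝ) (hσ0 : σ 0 = 0)
    (hσ : ∀ x : V, x ≠ 0 → ∃ (s : ℕ) (l : Fin (s + 1) → ℝ) (e : Fin (s + 1) → V),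
      StrictAnti l ∧ (∀ i, 0 < l i) ∧
      (∀ i, J.IsTripotent (e i) ∧ e i ≠ 0) ∧
      (∀ i j, i ≠ j → J.Orthog (e i) (e j)) ∧
      x = ∑ i, (l i : ℂ) • e i ∧ σ x = l 0) :
    (∀ x : V, σ x = 0 ↔ x = 0) ∧
    (∀ (c : ℂ) (x : V), σ (c • x) = ‖c‖ * σ x) ∧
    (∀ x y : V, σ (x + y) ≤ σ x + σ y) ∧
    (∀ x : V, 0 ≤ σ x) := by
  classical
  open Stmt15Aux in
  -- decomposition property without the σ-data
  have hdec : ∀ x : V, x ≠ 0 → ∃ (s : ℕ) (l : Fin (s + 1) → ℝ) (e : Fin (s + 1) → V),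
      (∀ i, 0 < l i) ∧ (∀ i, J.IsTripotent (e i) ∧ e i ≠ 0) ∧
      (∀ i j, i ≠ j → J.Orthog (e i) (e j)) ∧ x = ∑ i, (l i : ℂ) • e i := by
    intro x hx
    obtain ⟨s, l, e, _, h2, h3, h4, h5, _⟩ := hσ x hx
    exact ⟨s, l, e, h2, h3, h4, h5⟩
  have hB := Bpos J hdec
  have hB1 : ∀ w : V, 0 ≤ (B J w w).re ∧ (B J w w).im = 0 := fun w => (hB w).1
  -- the exact value at the top tripotent
  have claimBre : ∀ (s : ℕ) (l : Fin (s + 1) → ℝ) (e : Fin (s + 1) → V) (z : V),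
      (∀ i, J.IsTripotent (e i) ∧ e i ≠ 0) →
      (∀ i j, i ≠ j → J.Orthog (e i) (e j)) →
      z = ∑ i, (l i : ℂ) • e i →
      (B J (J.trip z z (e 0)) (e 0)).re = 2 * (l 0)^2 * (B J (e 0) (e 0)).re := by
    intro s l e z htrip horth hzsum
    have h := claimB J (fun i => (htrip i).1) horth l 0
    rw [← hzsum] at h
    rw [h, B_smul_left]
    have hc : (2:ℂ) * ((l 0 : ℂ))^2 = ((2 * (l 0)^2 : ℝ) : ℂ) := by push_cast; ring
    rw [hc, Complex.re_ofReal_mul]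
  -- the quadratic upper bound from any decomposition
  have claimAre : ∀ (s : ℕ) (l : Fin (s + 1) → ℝ) (e : Fin (s + 1) → V) (z : V),
      (∀ i, 0 < l i) →
      (∀ i, J.IsTripotent (e i) ∧ e i ≠ 0) →
      (∀ i j, i ≠ j → J.Orthog (e i) (e j)) →
      (∀ i, l i ≤ l 0) →
      z = ∑ i, (l i : ℂ) • e i →
      ∀ v : V, 0 ≤ (B J (J.trip z z v) v).re ∧
        (B J (J.trip z z v) v).re ≤ 2 * (l 0)^2 * (B J v v).re := by
    intro s l e z hlpos htrip horth hmax hzsum v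
    have h := claimA J hB1 (fun i => (htrip i).1) horth l ((l 0)^2) (sq_nonneg _)
      (fun i => by
        have h1 := hlpos i
        have h2 := hmax i
        nlinarith) v
    rwa [← hzsum] at h
  -- nonnegativity of the quadratic form
  have qf_nonneg : ∀ (p v : V), 0 ≤ (B J (J.trip p p v) v).re := by
    intro p v
    by_cases hp : p = 0
    · subst hp
      rw [trip_zero_left', B_zero_left]
      exact le_refl _
    · obtain ⟨s, l, e, hlpos, htrip, horth, hzsum⟩ := hdec p hp
      have : ∀ i, l i ≤ Finset.univ.sup' ⟨0, Finset.mem_univ 0⟩ l := by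
        intro i; exact Finset.le_sup' l (Finset.mem_univ i)
      -- use claimA directly with a sup bound
      have h := claimA J hB1 (fun i => (htrip i).1) horth l
        ((Finset.univ.sup' ⟨0, Finset.mem_univ 0⟩ l)^2)
        (sq_nonneg _)
        (fun i => by
          have h1 := hlpos i
          have h2 := this i
          nlinarith) v
      rw [← hzsum] at h
      exact h.1
  -- uniqueness of the top eigenvalue
  have top_le : ∀ (z : V),
      ∀ (s : ℕ) (l : Fin (s + 1) → ℝ) (e : Fin (s + 1) → V),
      (∀ i, 0 < l i) → (∀ i, J.IsTripotent (e i) ∧ e i ≠ 0) →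
      (∀ i j, i ≠ j → J.Orthog (e i) (e j)) → (∀ i, l i ≤ l 0) →
      z = ∑ i, (l i : ℂ) • e i →
      ∀ (t : ℕ) (m : Fin (t + 1) → ℝ) (f : Fin (t + 1) → V),
      (∀ i, 0 < m i) → (∀ i, J.IsTripotent (f i) ∧ f i ≠ 0) →
      (∀ i j, i ≠ j → J.Orthog (f i) (f j)) → (∀ i, m i ≤ m 0) →
      z = ∑ i, (m i : ℂ) • f i →
      l 0 ≤ m 0 := by
    intro z s l e hl1 hl2 hl3 hl4 hl5 t m f hm1 hm2 hm3 hm4 hm5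
    set K := (B J (e 0) (e 0)).re with hK
    have hKpos : 0 < K := (hB (e 0)).2 (hl2 0).2
    have heq := claimBre s l e z hl2 hl3 hl5
    have hle := (claimAre t m f z hm1 hm2 hm3 hm4 hm5 (e 0)).2
    rw [heq] at hle
    have h1 : (l 0)^2 ≤ (m 0)^2 := by
      by_contra hcon
      push_neg at hcon
      nlinarith
    have h2 : 0 < l 0 := hl1 0
    have h3 : 0 < m 0 := hm1 0
    nlinarith
  -- σ equals the top coefficient of ANY decomposition
  have σ_eq : ∀ (z : V), z ≠ 0 →
      ∀ (s : ℕ) (l : Fin (s + 1) → ℝ) (e : Fin (s + 1) → V),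
      (∀ i, 0 < l i) → (∀ i, J.IsTripotent (e i) ∧ e i ≠ 0) →
      (∀ i j, i ≠ j → J.Orthog (e i) (e j)) → (∀ i, l i ≤ l 0) →
      z = ∑ i, (l i : ℂ) • e i → σ z = l 0 := by
    intro z hz s l e h1 h2 h3 h4 h5
    obtain ⟨t, m, f, hmono, hm1, hm2, hm3, hm4, hm5⟩ := hσ z hz
    have hmmax : ∀ i, m i ≤ m 0 := fun i => hmono.antitone (Fin.zero_le i)
    have hle1 := top_le z s l e h1 h2 h3 h4 h5 t m f hm1 hm2 hm3 hmmax hm4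
    have hle2 := top_le z t m f hm1 hm2 hm3 hmmax hm4 s l e h1 h2 h3 h4 h5
    rw [hm5]
    linarith
  -- part 1 and part 4
  have part4 : ∀ x : V, 0 ≤ σ x := by
    intro x
    by_cases hx : x = 0
    · subst hx; rw [hσ0]
    · obtain ⟨s, l, e, _, hl, _, _, _, hval⟩ := hσ x hx
      rw [hval]; exact (hl 0).le
  have part1 : ∀ x : V, σ x = 0 ↔ x = 0 := by
    intro x
    constructor
    · intro h
      by_contra hx
      obtain ⟨s, l, e, _, hl, _, _, _, hval⟩ := hσ x hx
      rw [hval] at h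
      exact absurd h (ne_of_gt (hl 0))
    · intro h; subst h; exact hσ0
  refine ⟨part1, ?_, ?_, part4⟩
  · -- homogeneity
    intro c x
    by_cases hc : c = 0
    · subst hc; simp [hσ0]
    by_cases hx : x = 0
    · subst hx; simp [hσ0]
    obtain ⟨s, l, e, hmono, hl1, hl2, hl3, hl4, hl5⟩ := hσ x hx
    have hmax : ∀ i, l i ≤ l 0 := fun i => hmono.antitone (Fin.zero_le i)
    have hcn : (0:ℝ) < ‖c‖ := norm_pos_iff.mpr hc
    set a : ℂ := (↑‖c‖)⁻¹ * c with ha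
    have hcC : ((‖c‖ : ℂ)) ≠ 0 := by
      exact_mod_cast ne_of_gt hcn
    have hna : ‖a‖ = 1 := by
      rw [ha, norm_mul, norm_inv, Complex.norm_real, Real.norm_of_nonneg hcn.le,
        inv_mul_cancel₀ (ne_of_gt hcn)]
    have hane : a ≠ 0 := by
      intro h
      rw [h, norm_zero] at hna
      norm_num at hna
    have hana : (starRingEnd ℂ a) * a = 1 := by
      have h1 : a * (starRingEnd ℂ a) = ((Complex.normSq a : ℝ) : ℂ) := Complex.mul_conj a
      have h2 : Complex.normSq a = 1 := by
        have := Complex.sq_norm a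
        rw [hna] at this
        linarith [this.symm]
      rw [mul_comm, h1, h2, Complex.ofReal_one]
    have htrip' : ∀ i, J.IsTripotent (a • e i) ∧ a • e i ≠ 0 := by
      intro i
      refine ⟨?_, smul_ne_zero hane (hl2 i).2⟩
      unfold HJTS.IsTripotent
      rw [J.smul_left, J.smul_mid, Stmt15Aux.smul_right, (hl2 i).1]
      rw [smul_smul, smul_smul, smul_smul, smul_smul]
      congr 1
      linear_combination (2 * a) * hana
    have horth' : ∀ i j, i ≠ j → J.Orthog (a • e i) (a • e j) := by
      intro i j hij z
      rw [J.smul_left, J.smul_mid, hl3 i j hij z, smul_zero, smul_zero]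
    have hsum' : c • x = ∑ i, ((‖c‖ * l i : ℝ) : ℂ) • (a • e i) := by
      rw [hl4, Finset.smul_sum]
      refine Finset.sum_congr rfl fun i _ => ?_
      rw [smul_smul, smul_smul]
      congr 1
      have habs : ((‖c‖ : ℝ) : ℂ) ≠ 0 := by
        exact_mod_cast norm_ne_zero_iff.mpr hc
      rw [ha]
      push_cast
      field_simp
    have hcx : c • x ≠ 0 := smul_ne_zero hc hx
    have hval := σ_eq (c • x) hcx s (fun i => ‖c‖ * l i) (fun i => a • e i)
      (fun i => mul_pos hcn (hl1 i)) htrip' horth'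
      (fun i => mul_le_mul_of_nonneg_left (hmax i) hcn.le) hsum'
    rw [hval, hl5]
  · -- subadditivity
    intro x y
    by_cases hx : x = 0
    · subst hx; simp [hσ0]
    by_cases hy : y = 0
    · subst hy; simp [hσ0]
    by_cases hxy : x + y = 0
    · rw [hxy, hσ0]
      exact add_nonneg (part4 x) (part4 y)
    obtain ⟨s, l, e, hmono, hl1, hl2, hl3, hl4, hl5⟩ := hσ (x + y) hxy
    have hmax : ∀ i, l i ≤ l 0 := fun i => hmono.antitone (Fin.zero_le i)
    obtain ⟨sx, lx, ex, hxmono, hx1, hx2, hx3, hx4, hx5⟩ := hσ x hx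
    have hxmax : ∀ i, lx i ≤ lx 0 := fun i => hxmono.antitone (Fin.zero_le i)
    obtain ⟨sy, ly, ey, hymono, hy1, hy2, hy3, hy4, hy5⟩ := hσ y hy
    have hymax : ∀ i, ly i ≤ ly 0 := fun i => hymono.antitone (Fin.zero_le i)
    set v := e 0 with hv
    set K := (B J v v).re with hK
    have hKpos : 0 < K := (hB v).2 (hl2 0).2
    have haa0 : 0 ≤ σ x := part4 x
    have hbb0 : 0 ≤ σ y := part4 y
    set A := (B J (J.trip x x v) v).re with hA
    set C := (B J (J.trip y y v) v).re with hC
    set mm := (B J (J.trip x y v) v).re + (B J (J.trip y x v) v).re with hmm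
    have hA0 : 0 ≤ A := qf_nonneg x v
    have hC0 : 0 ≤ C := qf_nonneg y v
    have hAle : A ≤ 2 * (σ x)^2 * K := by
      rw [hx5]
      exact (claimAre sx lx ex x hx1 hx2 hx3 hxmax hx4 v).2
    have hCle : C ≤ 2 * (σ y)^2 * K := by
      rw [hy5]
      exact (claimAre sy ly ey y hy1 hy2 hy3 hymax hy4 v).2
    -- expansion of the cross terms
    have hexpand : ∀ t : ℝ, J.trip (x + (t:ℂ) • y) (x + (t:ℂ) • y) v
        = J.trip x x v + (t:ℂ) • J.trip x y v + (t:ℂ) • J.trip y x v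
          + ((t:ℂ) * (t:ℂ)) • J.trip y y v := by
      intro t
      rw [J.add_left, J.smul_left, J.add_mid, J.add_mid, J.smul_mid, J.smul_mid,
        Complex.conj_ofReal, smul_add, smul_smul]
      abel
    have hre : ∀ t : ℝ, (B J (J.trip (x + (t:ℂ) • y) (x + (t:ℂ) • y) v) v).re
        = A + mm * t + C * (t * t) := by
      intro t
      rw [hexpand t, B_add_left, B_add_left, B_add_left, B_smul_left, B_smul_left,
        B_smul_left]
      have hc2 : ((t:ℂ) * (t:ℂ)) = ((t * t : ℝ) : ℂ) := by push_cast; ring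
      rw [hc2]
      simp only [Complex.add_re, Complex.re_ofReal_mul]
      rw [hA, hC, hmm]
      ring
    have hquad : ∀ t : ℝ, 0 ≤ C * (t * t) + mm * t + A := by
      intro t
      have h0 := qf_nonneg (x + (t:ℂ) • y) v
      rw [hre t] at h0
      linarith
    have hdisc : mm^2 - 4 * C * A ≤ 0 := by
      have := discrim_le_zero hquad
      rwa [discrim] at this
    have hmmle : mm ≤ 4 * (σ x) * (σ y) * K := by
      have hM0 : 0 ≤ 4 * (σ x) * (σ y) * K := by positivity
      have hM : mm^2 ≤ (4 * (σ x) * (σ y) * K)^2 := by nlinarith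
      calc mm ≤ |mm| := le_abs_self mm
      _ = Real.sqrt (mm^2) := (Real.sqrt_sq_eq_abs mm).symm
      _ ≤ Real.sqrt ((4 * (σ x) * (σ y) * K)^2) := Real.sqrt_le_sqrt hM
      _ = 4 * (σ x) * (σ y) * K := Real.sqrt_sq hM0
    have heq : 2 * (σ (x + y))^2 * K = A + mm + C := by
      have h := claimBre s l e (x + y) hl2 hl3 hl4
      rw [← hl5] at h
      have hexp : J.trip (x + y) (x + y) v
          = J.trip x x v + J.trip x y v + J.trip y x v + J.trip y y v := by
        rw [J.add_left, J.add_mid, J.add_mid]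
        abel
      rw [hexp, B_add_left, B_add_left, B_add_left] at h
      simp only [Complex.add_re] at h
      rw [← hv, ← hK] at h
      rw [← h, hA, hC, hmm]
      ring
    have hfin : (σ (x + y))^2 ≤ (σ x + σ y)^2 := by
      have h1 : 2 * (σ (x + y))^2 * K ≤ 2 * (σ x + σ y)^2 * K := by
        calc 2 * (σ (x + y))^2 * K = A + mm + C := heq
        _ ≤ 2 * (σ x)^2 * K + 4 * (σ x) * (σ y) * K + 2 * (σ y)^2 * K := by linarith
        _ = 2 * (σ x + σ y)^2 * K := by ring
      nlinarith
    have hs0 : 0 ≤ σ (x + y) := part4 (x + y)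
    have hab0 : 0 ≤ σ x + σ y := by linarith
    calc σ (x + y) = Real.sqrt ((σ (x + y))^2) := (Real.sqrt_sq hs0).symm
    _ ≤ Real.sqrt ((σ x + σ y)^2) := Real.sqrt_le_sqrt hfin
    _ = σ x + σ y := Real.sqrt_sq hab0
end
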